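/- arXiv:2505.12003 — 4 statements merged into one kernel-verified Lean document; each statement's English description precedes it below -/
import Mathlib

section
/- Let M ∈ ℝ^{h×h} be a symmetric matrix with all eigenvalues in the interval [0,1]. Then there exist k ∈ ℕ and W ∈ ℝ^{k×h} with spectral norm ‖W‖₂ ≤ 1 such that Mx = x − 2 Wᵀ ReLU(Wx) for all x ∈ ℝ^h, where ReLU(t) = max{t,0} is applied entrywise. Consequently the linear map x ↦ Mx belongs to E_{h,σ} with σ = ReLU. -/
open scoped BigOperators

noncomputable section

def relu (t : ℝ) : ℝ := max t 0

def entrywise {n : ℕ} (σ : ℝ → ℝ) (x : EuclideanSpace ℝ (Fin n)) : EuclideanSpace ℝ (Fin n) :=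
  WithLp.toLp 2 (fun i => σ (x i))

def matVec {k h : ℕ} (W : Matrix (Fin k) (Fin h) ℝ) (x : EuclideanSpace ℝ (Fin h)) :
    EuclideanSpace ℝ (Fin k) :=
  Matrix.toEuclideanLin W x

/-- Spectral norm of a real matrix, as the operator norm between Euclidean spaces. -/
def specNorm {k h : ℕ} (W : Matrix (Fin k) (Fin h) ℝ) : ℝ :=
  ‖LinearMap.toContinuousLinearMap (Matrix.toEuclideanLin W)‖

/-- Membership in `E_{h,σ}` with `σ = ReLU`. -/
def IsEulerStep {h : ℕ} (Φ : EuclideanSpace ℝ (Fin h) → EuclideanSpace ℝ (Fin h)) : Prop :=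
  ∃ (k : ℕ) (W : Matrix (Fin k) (Fin h) ℝ) (b : EuclideanSpace ℝ (Fin k)) (τ : ℝ),
    0 ≤ τ ∧ τ ≤ 2 ∧ specNorm W ≤ 1 ∧
    ∀ x, Φ x = x - τ • matVec W.transpose (entrywise relu (matVec W x + b))

def compChain {α : Type*} : (L : ℕ) → (Fin L → α → α) → α → α
  | 0, _, x => x
  | L + 1, Φ, x => Φ (Fin.last L) (compChain L (fun i => Φ i.castSucc) x)

/-- Membership in `G_{d,σ}(X,ℝ)` with `σ = ReLU`. -/
def InG {d : ℕ} (X : Set (EuclideanSpace ℝ (Fin d))) (g : EuclideanSpace ℝ (Fin d) → ℝ) : Prop :=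
  LipschitzOnWith 1 g X ∧
  ∃ (h L : ℕ) (Qhat : Matrix (Fin h) (Fin d) ℝ) (qhat : EuclideanSpace ℝ (Fin h))
    (Φ : Fin L → (EuclideanSpace ℝ (Fin h) → EuclideanSpace ℝ (Fin h)))
    (v : EuclideanSpace ℝ (Fin h)),
    (∀ ℓ, IsEulerStep (Φ ℓ)) ∧ ‖v‖ = 1 ∧
    ∀ x ∈ X, g x = ∑ i, v i * compChain L Φ (matVec Qhat x + qhat) i

def concatE {h₁ h₂ : ℕ} (u : EuclideanSpace ℝ (Fin h₁)) (v : EuclideanSpace ℝ (Fin h₂)) :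
    EuclideanSpace ℝ (Fin (h₁ + h₂)) :=
  WithLp.toLp 2 (Fin.append (fun i => u i) (fun i => v i))

/-- The residual blocks in `Ẽ_{h,σ}`: `(max{x₁,x₂}, min{x₁,x₂}, x₃, Φ'(x₄,…,x_{h+3}))`. -/
def tildeLayer {h : ℕ} (Φ' : EuclideanSpace ℝ (Fin h) → EuclideanSpace ℝ (Fin h))
    (x : EuclideanSpace ℝ (Fin (h + 3))) : EuclideanSpace ℝ (Fin (h + 3)) :=
  WithLp.toLp 2 (fun j =>
    if _h0 : (j : ℕ) = 0 then max (x ⟨0, by omega⟩) (x ⟨1, by omega⟩)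
    else if _h1 : (j : ℕ) = 1 then min (x ⟨0, by omega⟩) (x ⟨1, by omega⟩)
    else if _h2 : (j : ℕ) = 2 then x ⟨2, by omega⟩
    else Φ' (WithLp.toLp 2 (fun i => x ⟨(i : ℕ) + 3, by have := i.isLt; omega⟩))
      ⟨(j : ℕ) - 3, by have := j.isLt; omega⟩)

/-- Membership in `Ẽ_{h,σ}` with `σ = ReLU`. -/
def IsTildeLayer {h : ℕ} (Φ : EuclideanSpace ℝ (Fin (h + 3)) → EuclideanSpace ℝ (Fin (h + 3))) :
    Prop :=
  ∃ Φ', IsEulerStep Φ' ∧ ∀ x, Φ x = tildeLayer Φ' x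

def emb0 {n : ℕ} : Fin 1 → Fin (n + 3) := fun _ => ⟨0, by omega⟩
def emb1 {n : ℕ} : Fin 1 → Fin (n + 3) := fun _ => ⟨1, by omega⟩
def emb2 {n : ℕ} : Fin 1 → Fin (n + 3) := fun _ => ⟨2, by omega⟩
def embT {n : ℕ} : Fin n → Fin (n + 3) := fun i => ⟨(i : ℕ) + 3, by have := i.isLt; omega⟩

/-- Membership in `R_{d,m}` for `m = (1,1,1,n)`: each block row of the matrix has spectral
norm at most `1`. -/
def memRm {d n : ℕ} (Q : Matrix (Fin (n + 3)) (Fin d) ℝ) : Prop :=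
  specNorm (Q.submatrix emb0 id) ≤ 1 ∧ specNorm (Q.submatrix emb1 id) ≤ 1 ∧
    specNorm (Q.submatrix emb2 id) ≤ 1 ∧ specNorm (Q.submatrix embT id) ≤ 1

def rowBlockSum {n r : ℕ} (A : Matrix (Fin (n + 3)) (Fin (n + 3)) ℝ)
    (e : Fin r → Fin (n + 3)) : ℝ :=
  specNorm (A.submatrix e emb0) + specNorm (A.submatrix e emb1) +
    specNorm (A.submatrix e emb2) + specNorm (A.submatrix e embT)

/-- Membership in `L_m` for `m = (1,1,1,n)`: for each block row, the sum of the spectral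
norms of the blocks is at most `1`. -/
def memLm {n : ℕ} (A : Matrix (Fin (n + 3)) (Fin (n + 3)) ℝ) : Prop :=
  rowBlockSum A emb0 ≤ 1 ∧ rowBlockSum A emb1 ≤ 1 ∧
    rowBlockSum A emb2 ≤ 1 ∧ rowBlockSum A embT ≤ 1

/-- `Φ_{L+1} ∘ A_L ∘ ⋯ ∘ Φ₂ ∘ A₁ ∘ Φ₁`, the alternating composition. -/
def altChain {α : Type*} : (L : ℕ) → (Fin (L + 1) → α → α) → (Fin L → α → α) → α → α
  | 0, Φ, _, x => Φ 0 x
  | L + 1, Φ, A, x =>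
      Φ (Fin.last (L + 1)) (A (Fin.last L)
        (altChain L (fun i => Φ i.castSucc) (fun i => A i.castSucc) x))

/-- Membership in the fixed-width class `tilde-G_{d,σ,n+3}(X,ℝ)` with `σ = ReLU`. -/
def InTildeG {d n : ℕ} (X : Set (EuclideanSpace ℝ (Fin d)))
    (g : EuclideanSpace ℝ (Fin d) → ℝ) : Prop :=
  ∃ (L : ℕ) (Qhat : Matrix (Fin (n + 3)) (Fin d) ℝ) (qhat : EuclideanSpace ℝ (Fin (n + 3)))
    (Φ : Fin (L + 1) → (EuclideanSpace ℝ (Fin (n + 3)) → EuclideanSpace ℝ (Fin (n + 3))))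
    (Ahat : Fin L → Matrix (Fin (n + 3)) (Fin (n + 3)) ℝ)
    (ahat : Fin L → EuclideanSpace ℝ (Fin (n + 3)))
    (v : EuclideanSpace ℝ (Fin (n + 3))),
    memRm Qhat ∧ (∀ ℓ, IsTildeLayer (Φ ℓ)) ∧ (∀ ℓ, memLm (Ahat ℓ)) ∧ (∑ i, |v i|) ≤ 1 ∧
    ∀ x ∈ X,
      g x = ∑ i, v i *
        altChain L Φ (fun ℓ u => matVec (Ahat ℓ) u + ahat ℓ) (matVec Qhat x + qhat) i

end


open scoped Pointwise
open Matrix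
open scoped MatrixOrder

private lemma relu_lin (a t : ℝ) : a * relu t + (-a) * relu (-t) = a * t := by
  unfold relu
  rcases le_total t 0 with h | h
  · rw [max_eq_right h, max_eq_left (by linarith)]; ring
  · rw [max_eq_left h, max_eq_right (by linarith)]; ring

private lemma matVec_apply' {k h : ℕ} (W : Matrix (Fin k) (Fin h) ℝ)
    (x : EuclideanSpace ℝ (Fin h)) (i : Fin k) :
    matVec W x i = (W *ᵥ (fun j => x j)) i := by
  rw [matVec, Matrix.toEuclideanLin_apply]

private lemma euclid_norm_sq' {n : ℕ} (y : EuclideanSpace ℝ (Fin n)) :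
    ‖y‖ ^ 2 = ∑ i, y i * y i := by
  rw [EuclideanSpace.real_norm_sq_eq]
  simp [sq]

/-- A symmetric matrix with all eigenvalues in `[0,1]` can be written as
`x ↦ x - 2 Wᵀ ReLU(Wx)` with `‖W‖₂ ≤ 1`; consequently it belongs to `E_{h,ReLU}`. -/
theorem stmt2 (h : ℕ) (M : Matrix (Fin h) (Fin h) ℝ) (hsymm : M.IsSymm)
    (hspec : ∀ μ ∈ spectrum ℝ M, μ ∈ Set.Icc (0 : ℝ) 1) :
    (∃ (k : ℕ) (W : Matrix (Fin k) (Fin h) ℝ), specNorm W ≤ 1 ∧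
      ∀ x : EuclideanSpace ℝ (Fin h),
        matVec M x = x - (2 : ℝ) • matVec W.transpose (entrywise relu (matVec W x))) ∧
    IsEulerStep (fun x => matVec M x) := by
  classical
  have hM : M.IsHermitian := by
    ext i j
    simp [Matrix.conjTranspose_apply, hsymm.apply]
  have hM0 : M.PosSemidef :=
    hM.posSemidef_iff_eigenvalues_nonneg.mpr (Pi.le_def.mpr fun i => (hspec _ (hM.eigenvalues_mem_spectrum_real i)).1)
  have h1M : (1 - M).IsHermitian := Matrix.isHermitian_one.sub hM
  have h1Mpsd : (1 - M).PosSemidef := by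
    refine h1M.posSemidef_iff_eigenvalues_nonneg.mpr (Pi.le_def.mpr fun i => ?_)
    show (0:ℝ) ≤ _
    have hmem := h1M.eigenvalues_mem_spectrum_real i
    have heq : (1 - M) = (algebraMap ℝ (Matrix (Fin h) (Fin h) ℝ)) 1 - M := by simp
    have hs : spectrum ℝ (1 - M) = ({(1:ℝ)} : Set ℝ) - spectrum ℝ M := by
      conv_lhs => rw [heq]
      exact (spectrum.singleton_sub_eq M 1).symm
    rw [hs, Set.mem_sub] at hmem
    obtain ⟨a, ha, b, hb, hab⟩ := hmem
    have hble := (hspec b hb).2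
    simp only [Set.mem_singleton_iff] at ha
    subst ha
    linarith [hab]
  set N : Matrix (Fin h) (Fin h) ℝ := ((1:ℝ)/2) • (1 - M) with hNdef
  have hN : N.PosSemidef := by
    refine Matrix.PosSemidef.of_dotProduct_mulVec_nonneg ?_ ?_
    · show Nᴴ = N
      rw [hNdef, Matrix.conjTranspose_smul, h1Mpsd.1]
      simp
    · intro x
      rw [hNdef, Matrix.smul_mulVec, dotProduct_smul]
      have := h1Mpsd.dotProduct_mulVec_nonneg x
      simp only [smul_eq_mul]
      linarith
  set V : Matrix (Fin h) (Fin h) ℝ := CFC.sqrt N with hVdef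
  have hVps : V.PosSemidef := (CFC.sqrt_nonneg N).posSemidef
  have hVV : V * V = N := CFC.sqrt_mul_sqrt_self N hN.nonneg
  have hVsymm : Vᵀ = V := by
    ext i j
    have := congrFun (congrFun hVps.1 i) j
    simpa [Matrix.conjTranspose_apply] using this
  set W : Matrix (Fin (h+h)) (Fin h) ℝ := Matrix.of (Fin.append (fun j => V j) (fun j => -V j)) with hWdef
  have hrow1 : ∀ (x : Fin h → ℝ) (j : Fin h), (W *ᵥ x) (Fin.castAdd h j) = (V *ᵥ x) j := by
    intro x j
    simp [hWdef, Matrix.mulVec, dotProduct, Fin.append_left]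
  have hWrow2 : ∀ (j : Fin h) (k : Fin h), W (Fin.natAdd h j) k = -(V j k) := by
    intro j k
    rw [hWdef, Matrix.of_apply, Fin.append_right]
    rfl
  have hrow2 : ∀ (x : Fin h → ℝ) (j : Fin h), (W *ᵥ x) (Fin.natAdd h j) = -((V *ᵥ x) j) := by
    intro x j
    simp only [Matrix.mulVec, dotProduct, hWrow2, neg_mul, Finset.sum_neg_distrib]
  have keyA : ∀ x : Fin h → ℝ,
      Wᵀ *ᵥ (fun j => relu ((W *ᵥ x) j)) = N *ᵥ x := by
    intro x
    funext i
    have step1 : (Wᵀ *ᵥ (fun j => relu ((W *ᵥ x) j))) i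
        = ∑ j : Fin (h+h), W j i * relu ((W *ᵥ x) j) := by
      simp [Matrix.mulVec, dotProduct, Matrix.transpose_apply]
    rw [step1, Fin.sum_univ_add]
    have hc : ∀ j : Fin h, W (Fin.castAdd h j) i = V j i := by
      intro j; simp [hWdef, Fin.append_left]
    have hn : ∀ j : Fin h, W (Fin.natAdd h j) i = -(V j i) := fun j => hWrow2 j i
    have hsum : ∑ j : Fin h, W (Fin.castAdd h j) i * relu ((W *ᵥ x) (Fin.castAdd h j))
        + ∑ j : Fin h, W (Fin.natAdd h j) i * relu ((W *ᵥ x) (Fin.natAdd h j))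
        = ∑ j : Fin h, V j i * ((V *ᵥ x) j) := by
      rw [← Finset.sum_add_distrib]
      refine Finset.sum_congr rfl fun j _ => ?_
      rw [hc, hn, hrow1, hrow2]
      exact relu_lin (V j i) ((V *ᵥ x) j)
    rw [hsum]
    have hsum2 : ∑ j : Fin h, V j i * ((V *ᵥ x) j) = (Vᵀ *ᵥ (V *ᵥ x)) i := by
      simp [Matrix.mulVec, dotProduct, Matrix.transpose_apply]
    rw [hsum2, Matrix.mulVec_mulVec, hVsymm, hVV]
  have keyB : ∀ x : Fin h → ℝ,
      ∑ j : Fin (h+h), (W *ᵥ x) j * (W *ᵥ x) j = 2 * (x ⬝ᵥ (N *ᵥ x)) := by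
    intro x
    rw [Fin.sum_univ_add]
    simp only [hrow1, hrow2, neg_mul_neg]
    have hdp : x ⬝ᵥ (N *ᵥ x) = ∑ j : Fin h, (V *ᵥ x) j * (V *ᵥ x) j := by
      have hNx : N *ᵥ x = Vᵀ *ᵥ (V *ᵥ x) := by rw [Matrix.mulVec_mulVec, hVsymm, hVV]
      rw [hNx, Matrix.dotProduct_mulVec, Matrix.vecMul_transpose]
      simp only [dotProduct]
    rw [hdp]; ring
  -- spectral norm bound
  have hWnorm : specNorm W ≤ 1 := by
    rw [specNorm]
    refine ContinuousLinearMap.opNorm_le_bound _ zero_le_one fun x => ?_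
    rw [one_mul]
    have hco : (LinearMap.toContinuousLinearMap (Matrix.toEuclideanLin W)) x = matVec W x := rfl
    rw [hco]
    have hsq1 : ‖matVec W x‖ ^ 2 = ∑ j, (W *ᵥ (fun i => x i)) j * (W *ᵥ (fun i => x i)) j := by
      rw [euclid_norm_sq']
      refine Finset.sum_congr rfl fun j _ => ?_
      rw [matVec_apply']
    have hsq2 : ‖x‖ ^ 2 = (fun i => x i) ⬝ᵥ (fun i => x i) := by
      rw [euclid_norm_sq']; rfl
    set xf : Fin h → ℝ := fun i => x i with hxf
    have hMx : (0:ℝ) ≤ xf ⬝ᵥ (M *ᵥ xf) := by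
      have := hM0.dotProduct_mulVec_nonneg xf
      simpa using this
    have hNval : 2 * (xf ⬝ᵥ (N *ᵥ xf)) = xf ⬝ᵥ xf - xf ⬝ᵥ (M *ᵥ xf) := by
      rw [hNdef, Matrix.smul_mulVec, dotProduct_smul, Matrix.sub_mulVec,
        Matrix.one_mulVec, dotProduct_sub]
      simp only [smul_eq_mul]
      ring
    have hle : ‖matVec W x‖ ^ 2 ≤ ‖x‖ ^ 2 := by
      rw [hsq1, keyB xf, hsq2, hNval]
      linarith
    nlinarith [norm_nonneg (matVec W x), norm_nonneg x]
  -- main identity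
  have main : ∀ x : EuclideanSpace ℝ (Fin h),
      matVec M x = x - (2 : ℝ) • matVec W.transpose (entrywise relu (matVec W x)) := by
    intro x
    ext i
    set xf : Fin h → ℝ := fun j => x j with hxf
    have hrelu : (fun j => (entrywise relu (matVec W x)) j) = fun j => relu ((W *ᵥ xf) j) := by
      funext j
      show relu (matVec W x j) = _
      rw [matVec_apply']
    have hRHS : matVec W.transpose (entrywise relu (matVec W x)) i = (N *ᵥ xf) i := by
      rw [matVec_apply', hrelu, keyA xf]
    have hNi : (N *ᵥ xf) i = (1/2 : ℝ) * (xf i - (M *ᵥ xf) i) := by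
      rw [hNdef, Matrix.smul_mulVec, Matrix.sub_mulVec, Matrix.one_mulVec]
      simp [Pi.smul_apply, Pi.sub_apply]
    have hLHS : matVec M x i = (M *ᵥ xf) i := matVec_apply' M x i
    have hsub : (x - (2 : ℝ) • matVec W.transpose (entrywise relu (matVec W x))) i
        = x i - 2 * (matVec W.transpose (entrywise relu (matVec W x)) i) := by
      simp [PiLp.sub_apply, PiLp.smul_apply]
    rw [hLHS, hsub, hRHS, hNi]
    show (M *ᵥ xf) i = xf i - 2 * ((1/2 : ℝ) * (xf i - (M *ᵥ xf) i))
    ring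
  refine ⟨⟨h + h, W, hWnorm, main⟩, h + h, W, 0, 2, by norm_num, le_refl 2, hWnorm, fun x => ?_⟩
  rw [add_zero]
  exact main x
end

section
/- Let d ∈ ℕ, X ⊆ ℝ^d, and σ = ReLU. If f, g ∈ G_{d,σ}(X,ℝ), then the functions h, k : X → ℝ defined by h(x) = max{f(x), g(x)} and k(x) = min{f(x), g(x)} also belong to G_{d,σ}(X,ℝ); that is, G_{d,σ}(X,ℝ) is a lattice. -/
open scoped BigOperators

noncomputable section Aux
namespace Stmt4Aux

open Finset

abbrev ES (n : ℕ) := EuclideanSpace ℝ (Fin n)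

lemma matVec_apply {k h : ℕ} (W : Matrix (Fin k) (Fin h) ℝ) (x : ES h) (i : Fin k) :
    matVec W x i = ∑ j, W i j * x j := by
  simp [matVec, Matrix.toEuclideanLin_apply, Matrix.mulVec, dotProduct]

lemma norm_matVec_le {k h : ℕ} {W : Matrix (Fin k) (Fin h) ℝ} (hW : specNorm W ≤ 1)
    (x : ES h) : ‖matVec W x‖ ≤ ‖x‖ := by
  have h1 : matVec W x = (LinearMap.toContinuousLinearMap (Matrix.toEuclideanLin W)) x := rfl
  rw [h1]
  calc ‖_‖ ≤ ‖LinearMap.toContinuousLinearMap (Matrix.toEuclideanLin W)‖ * ‖x‖ :=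
        ContinuousLinearMap.le_opNorm _ _
    _ ≤ 1 * ‖x‖ := by have h0 : (0:ℝ) ≤ ‖x‖ := norm_nonneg _; exact mul_le_mul_of_nonneg_right hW h0
    _ = ‖x‖ := one_mul _

lemma specNorm_le_one {k h : ℕ} {W : Matrix (Fin k) (Fin h) ℝ}
    (hW : ∀ x, ‖matVec W x‖ ≤ ‖x‖) : specNorm W ≤ 1 :=
  ContinuousLinearMap.opNorm_le_bound _ zero_le_one (fun x => by rw [one_mul]; exact hW x)

lemma norm_euclid {n : ℕ} (x : ES n) : ‖x‖ = Real.sqrt (∑ i, (x i)^2) := by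
  rw [EuclideanSpace.norm_eq]
  congr 1
  exact Finset.sum_congr rfl fun i _ => sq_abs _

lemma sum_sq_eq {n : ℕ} (x : ES n) : ∑ i, (x i)^2 = ‖x‖^2 := by
  rw [norm_euclid, Real.sq_sqrt (by positivity)]

lemma abs_sum_mul_le {n : ℕ} (x y : ES n) : |∑ i, x i * y i| ≤ ‖x‖ * ‖y‖ := by
  have h : ∑ i, x i * y i = (inner ℝ x y : ℝ) := by simp [PiLp.inner_apply, mul_comm]
  rw [h]; exact abs_real_inner_le_norm x y

variable {h1 h2 : ℕ}

def inL (i : Fin h1) : Fin (h1 + h2) := ⟨i.1, by have := i.isLt; omega⟩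
def inR (i : Fin h2) : Fin (h1 + h2) := ⟨h1 + i.1, by have := i.isLt; omega⟩

def pL (x : ES (h1 + h2)) : ES h1 := WithLp.toLp 2 (fun i => x (inL i))
def pR (x : ES (h1 + h2)) : ES h2 := WithLp.toLp 2 (fun i => x (inR i))

def cat (u : ES h1) (v : ES h2) : ES (h1 + h2) := WithLp.toLp 2 fun (j : Fin (h1 + h2)) =>
  if h : j.1 < h1 then u ⟨j.1, h⟩ else v ⟨j.1 - h1, by have := j.isLt; omega⟩

lemma cat_inL (u : ES h1) (v : ES h2) (i : Fin h1) : cat u v (inL (h2 := h2) i) = u i := by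
  simp [cat, inL, i.isLt]

lemma cat_inR (u : ES h1) (v : ES h2) (i : Fin h2) : cat u v (inR (h1 := h1) i) = v i := by
  have hn : ¬ (h1 + i.1 < h1) := by omega
  simp only [cat, inR, WithLp.ofLp_toLp, dif_neg hn]
  exact congrArg v.ofLp <| Fin.ext (by simp)

lemma cat_pL_pR (x : ES (h1 + h2)) : cat (pL x) (pR x) = x := by
  ext j
  by_cases h : j.1 < h1
  · simp only [cat, pL, WithLp.ofLp_toLp, dif_pos h]
    rfl
  · simp only [cat, pR, WithLp.ofLp_toLp, dif_neg h]
    exact congrArg x.ofLp <| Fin.ext (by simp [inR]; omega)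

lemma sum_split (F : Fin (h1 + h2) → ℝ) :
    ∑ j, F j = (∑ i : Fin h1, F (inL i)) + ∑ i : Fin h2, F (inR i) :=
  Fin.sum_univ_add F

lemma sum_cat_mul (a c : ES h1) (b d : ES h2) :
    ∑ j, cat a b j * cat c d j = (∑ i, a i * c i) + ∑ i, b i * d i := by
  rw [sum_split (fun j => cat a b j * cat c d j)]
  congr 1
  · exact Finset.sum_congr rfl fun i _ => by rw [cat_inL, cat_inL]
  · exact Finset.sum_congr rfl fun i _ => by rw [cat_inR, cat_inR]

lemma norm_cat (u : ES h1) (v : ES h2) : ‖cat u v‖ = Real.sqrt (‖u‖^2 + ‖v‖^2) := by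
  rw [norm_euclid, sum_split (fun j => (cat u v j)^2), ← sum_sq_eq u, ← sum_sq_eq v]
  congr 1
  congr 1
  · exact Finset.sum_congr rfl fun i _ => by rw [cat_inL]
  · exact Finset.sum_congr rfl fun i _ => by rw [cat_inR]

lemma norm_pL_le (x : ES (h1 + h2)) : ‖pL x‖ ≤ ‖x‖ := by
  rw [norm_euclid, norm_euclid]
  apply Real.sqrt_le_sqrt
  rw [sum_split (fun j => (x j)^2)]
  have : ∑ i : Fin h1, (pL x i)^2 = ∑ i : Fin h1, (x (inL (h2 := h2) i))^2 := rfl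
  rw [this]
  have h0 : (0:ℝ) ≤ ∑ i : Fin h2, (x (inR (h1 := h1) i))^2 := by positivity
  linarith

lemma norm_pR_le (x : ES (h1 + h2)) : ‖pR x‖ ≤ ‖x‖ := by
  rw [norm_euclid, norm_euclid]
  apply Real.sqrt_le_sqrt
  rw [sum_split (fun j => (x j)^2)]
  have : ∑ i : Fin h2, (pR x i)^2 = ∑ i : Fin h2, (x (inR (h1 := h1) i))^2 := rfl
  rw [this]
  have h0 : (0:ℝ) ≤ ∑ i : Fin h1, (x (inL (h2 := h2) i))^2 := by positivity
  linarith

lemma cat_add (a c : ES h1) (b d : ES h2) : cat a b + cat c d = cat (a + c) (b + d) := by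
  ext j
  show cat a b j + cat c d j = cat (a + c) (b + d) j
  unfold cat
  simp only [WithLp.ofLp_toLp]
  split <;> rfl

/-- coordinate formula for an Euler step -/
lemma eulerForm_apply {h k : ℕ} (W : Matrix (Fin k) (Fin h) ℝ) (b : ES k)
    (τ : ℝ) (x : ES h) (j : Fin h) :
    (x - τ • matVec W.transpose (entrywise relu (matVec W x + b))) j
      = x j - τ * ∑ i, W i j * relu (matVec W x i + b i) := by
  have hc : (x - τ • matVec W.transpose (entrywise relu (matVec W x + b))) j
      = x j - τ * (matVec W.transpose (entrywise relu (matVec W x + b))) j := rfl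
  rw [hc, matVec_apply]
  simp [entrywise]

def stack {d : ℕ} (A : Matrix (Fin h1) (Fin d) ℝ) (B : Matrix (Fin h2) (Fin d) ℝ) :
    Matrix (Fin (h1 + h2)) (Fin d) ℝ :=
  Matrix.of fun j c =>
    if h : j.1 < h1 then A ⟨j.1, h⟩ c else B ⟨j.1 - h1, by have := j.isLt; omega⟩ c

lemma matVec_stack {d : ℕ} (A : Matrix (Fin h1) (Fin d) ℝ) (B : Matrix (Fin h2) (Fin d) ℝ)
    (x : ES d) : matVec (stack A B) x = cat (matVec A x) (matVec B x) := by
  ext j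
  rw [matVec_apply]
  unfold cat
  simp only [WithLp.ofLp_toLp]
  split
  · rw [matVec_apply]
    exact Finset.sum_congr rfl fun c _ => by unfold stack; rw [Matrix.of_apply, dif_pos]
  · rw [matVec_apply]
    refine Finset.sum_congr rfl fun c _ => ?_
    unfold stack
    rw [Matrix.of_apply, dif_neg (by assumption)]

def extL (Φ : ES h1 → ES h1) : ES (h1 + h2) → ES (h1 + h2) :=
  fun x => cat (Φ (pL x)) (pR x)

def extR (Φ : ES h2 → ES h2) : ES (h1 + h2) → ES (h1 + h2) :=
  fun x => cat (pL x) (Φ (pR x))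

lemma isEulerStep_extL {Φ : ES h1 → ES h1} (hΦ : IsEulerStep Φ) :
    IsEulerStep (extL (h2 := h2) Φ) := by
  obtain ⟨k, W, b, τ, hτ0, hτ2, hW, hEq⟩ := hΦ
  set W' : Matrix (Fin k) (Fin (h1 + h2)) ℝ :=
    Matrix.of (fun i (j : Fin (h1 + h2)) => if h : j.1 < h1 then W i ⟨j.1, h⟩ else 0) with hW'def
  have hW'app : ∀ i (j : Fin (h1 + h2)),
      W' i j = if h : j.1 < h1 then W i ⟨j.1, h⟩ else 0 := fun i j => rfl
  have hWx : ∀ x, matVec W' x = matVec W (pL x) := by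
    intro x
    ext i
    rw [matVec_apply, matVec_apply, sum_split (fun j => W' i j * x j)]
    have e2 : (∑ i2 : Fin h2, W' i (inR i2) * x (inR i2)) = 0 := by
      refine Finset.sum_eq_zero fun i2 _ => ?_
      rw [hW'app, dif_neg (by simp only [inR]; omega), zero_mul]
    rw [e2, add_zero]
    refine Finset.sum_congr rfl fun i1 _ => ?_
    rw [hW'app, dif_pos (show (inL (h2 := h2) i1).1 < h1 from i1.isLt)]
    rfl
  refine ⟨k, W', b, τ, hτ0, hτ2, ?_, ?_⟩
  · refine specNorm_le_one fun x => ?_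
    rw [hWx]
    exact (norm_matVec_le hW _).trans (norm_pL_le x)
  · intro x
    ext j
    rw [eulerForm_apply]
    by_cases h : j.1 < h1
    · have hl : extL (h2 := h2) Φ x j = Φ (pL x) ⟨j.1, h⟩ := by
        show cat _ _ j = _
        unfold cat
        rw [WithLp.ofLp_toLp, dif_pos h]
      rw [hl, hEq (pL x), eulerForm_apply]
      have hx : pL (h2 := h2) x ⟨j.1, h⟩ = x j := rfl
      rw [hx]
      congr 1
      congr 1
      refine Finset.sum_congr rfl fun i _ => ?_
      rw [hWx, hW'app, dif_pos h]
    · have hl : extL (h2 := h2) Φ x j = x j := by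
        show cat _ _ j = _
        unfold cat
        rw [WithLp.ofLp_toLp, dif_neg h]
        show x (inR _) = x j
        exact congrArg x.ofLp <| Fin.ext (by simp [inR]; omega)
      rw [hl]
      have e0 : (∑ i, W' i j * relu (matVec W' x i + b i)) = 0 := by
        refine Finset.sum_eq_zero fun i _ => ?_
        rw [hW'app, dif_neg h, zero_mul]
      rw [e0, mul_zero, sub_zero]

lemma isEulerStep_extR {Φ : ES h2 → ES h2} (hΦ : IsEulerStep Φ) :
    IsEulerStep (extR (h1 := h1) Φ) := by
  obtain ⟨k, W, b, τ, hτ0, hτ2, hW, hEq⟩ := hΦ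
  set W' : Matrix (Fin k) (Fin (h1 + h2)) ℝ :=
    Matrix.of (fun i (j : Fin (h1 + h2)) =>
      if h : j.1 < h1 then 0 else W i ⟨j.1 - h1, by have := j.isLt; omega⟩) with hW'def
  have hW'app : ∀ i (j : Fin (h1 + h2)),
      W' i j = if h : j.1 < h1 then 0
        else W i ⟨j.1 - h1, by have := j.isLt; omega⟩ := fun i j => rfl
  have hWx : ∀ x, matVec W' x = matVec W (pR x) := by
    intro x
    ext i
    rw [matVec_apply, matVec_apply, sum_split (fun j => W' i j * x j)]
    have e1 : (∑ i1 : Fin h1, W' i (inL i1) * x (inL i1)) = 0 := by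
      refine Finset.sum_eq_zero fun i1 _ => ?_
      rw [hW'app, dif_pos (show (inL (h2 := h2) i1).1 < h1 from i1.isLt), zero_mul]
    rw [e1, zero_add]
    refine Finset.sum_congr rfl fun i2 _ => ?_
    rw [hW'app, dif_neg (show ¬ (inR (h1 := h1) i2).1 < h1 by
      show ¬ (h1 + i2.1 < h1); omega)]
    refine congrArg₂ (· * ·) (congrArg (W i) (Fin.ext ?_)) rfl
    show h1 + i2.1 - h1 = i2.1
    omega
  refine ⟨k, W', b, τ, hτ0, hτ2, ?_, ?_⟩
  · refine specNorm_le_one fun x => ?_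
    rw [hWx]
    exact (norm_matVec_le hW _).trans (norm_pR_le x)
  · intro x
    ext j
    rw [eulerForm_apply]
    by_cases h : j.1 < h1
    · have hl : extR (h1 := h1) Φ x j = x j := by
        show cat _ _ j = _
        unfold cat
        rw [WithLp.ofLp_toLp, dif_pos h]
        rfl
      rw [hl]
      have e0 : (∑ i, W' i j * relu (matVec W' x i + b i)) = 0 := by
        refine Finset.sum_eq_zero fun i _ => ?_
        rw [hW'app, dif_pos h, zero_mul]
      rw [e0, mul_zero, sub_zero]
    · have hj2 : j.1 - h1 < h2 := by have := j.isLt; omega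
      have hl : extR (h1 := h1) Φ x j = Φ (pR x) ⟨j.1 - h1, hj2⟩ := by
        show cat _ _ j = _
        unfold cat
        rw [WithLp.ofLp_toLp, dif_neg h]
      rw [hl, hEq (pR x), eulerForm_apply]
      have hx : pR (h1 := h1) x ⟨j.1 - h1, hj2⟩ = x j := by
        show x (inR _) = x j
        exact congrArg x.ofLp <| Fin.ext (by simp [inR]; omega)
      rw [hx]
      congr 1
      congr 1
      refine Finset.sum_congr rfl fun i _ => ?_
      rw [hWx, hW'app, dif_neg h]

lemma compChain_append {α : Type*} (L1 : ℕ) :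
    ∀ (L2 : ℕ) (Φ : Fin (L1 + L2) → α → α) (x : α),
    compChain (L1 + L2) Φ x
      = compChain L2 (fun i => Φ (Fin.natAdd L1 i))
          (compChain L1 (fun i => Φ (Fin.castAdd L2 i)) x)
  | 0, Φ, x => rfl
  | L2 + 1, Φ, x => by
      show Φ (Fin.last (L1 + L2)) (compChain (L1 + L2) (fun i => Φ i.castSucc) x) = _
      rw [compChain_append L1 L2 (fun i => Φ i.castSucc) x]
      rfl

lemma compChain_extL : ∀ (L : ℕ) (Ψ : Fin L → ES h1 → ES h1) (u : ES h1) (v : ES h2),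
    compChain L (fun i => extL (h2 := h2) (Ψ i)) (cat u v) = cat (compChain L Ψ u) v
  | 0, _, u, v => rfl
  | L + 1, Ψ, u, v => by
      show extL (Ψ (Fin.last L))
          (compChain L (fun i => extL (h2 := h2) (Ψ i.castSucc)) (cat u v)) = _
      rw [compChain_extL L (fun i => Ψ i.castSucc) u v]
      show cat (Ψ (Fin.last L) (pL (cat _ v))) (pR (cat _ v)) = _
      have e1 : pL (cat (compChain L (fun i => Ψ i.castSucc) u) v)
          = compChain L (fun i => Ψ i.castSucc) u := by
        ext i; exact cat_inL _ _ i
      have e2 : pR (cat (compChain L (fun i => Ψ i.castSucc) u) v) = v := by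
        ext i; exact cat_inR _ _ i
      rw [e1, e2]
      rfl

lemma compChain_extR : ∀ (L : ℕ) (Ψ : Fin L → ES h2 → ES h2) (u : ES h1) (v : ES h2),
    compChain L (fun i => extR (h1 := h1) (Ψ i)) (cat u v) = cat u (compChain L Ψ v)
  | 0, _, u, v => rfl
  | L + 1, Ψ, u, v => by
      show extR (Ψ (Fin.last L))
          (compChain L (fun i => extR (h1 := h1) (Ψ i.castSucc)) (cat u v)) = _
      rw [compChain_extR L (fun i => Ψ i.castSucc) u v]
      show cat (pL (cat u _)) (Ψ (Fin.last L) (pR (cat u _))) = _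
      have e1 : pL (cat u (compChain L (fun i => Ψ i.castSucc) v)) = u := by
        ext i; exact cat_inL _ _ i
      have e2 : pR (cat u (compChain L (fun i => Ψ i.castSucc) v))
          = compChain L (fun i => Ψ i.castSucc) v := by
        ext i; exact cat_inR _ _ i
      rw [e1, e2]
      rfl

lemma relu_const_mul (c t : ℝ) (hc : 0 ≤ c) : relu (c * t) = c * relu t := by
  unfold relu
  rcases le_total t 0 with h | h
  · rw [max_eq_right h, mul_zero, max_eq_right (mul_nonpos_iff.2 (Or.inl ⟨hc, h⟩))]
  · rw [max_eq_left h, max_eq_left (mul_nonneg hc h)]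

lemma add_relu_sub (a b : ℝ) : a + relu (b - a) = max a b := by
  unfold relu
  rcases le_total a b with h | h
  · rw [max_eq_left (sub_nonneg.2 h), max_eq_right h]; ring
  · rw [max_eq_right (sub_nonpos.2 h), max_eq_left h, add_zero]

lemma sub_relu_sub (a b : ℝ) : b - relu (b - a) = min a b := by
  unfold relu
  rcases le_total a b with h | h
  · rw [max_eq_left (sub_nonneg.2 h), min_eq_left h]; ring
  · rw [max_eq_right (sub_nonpos.2 h), min_eq_right h, sub_zero]

lemma sum_smul_mul {n : ℕ} (c : ℝ) (v u : ES n) :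
    ∑ i, (c • v) i * u i = c * ∑ i, v i * u i := by
  rw [Finset.mul_sum]
  exact Finset.sum_congr rfl fun i _ => by show (c * v i) * u i = _; ring

lemma sum_mul_smul {n : ℕ} (c : ℝ) (v u : ES n) :
    ∑ i, v i * (c • u) i = c * ∑ i, v i * u i := by
  rw [Finset.mul_sum]
  exact Finset.sum_congr rfl fun i _ => by show v i * (c * u i) = _; ring

lemma sum_zero_mul {n : ℕ} (u : ES n) : ∑ i, (0 : ES n) i * u i = 0 :=
  Finset.sum_eq_zero fun i _ => by show (0 : ℝ) * u i = 0; rw [zero_mul]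

lemma sum_mul_zero' {n : ℕ} (u : ES n) : ∑ i, u i * (0 : ES n) i = 0 :=
  Finset.sum_eq_zero fun i _ => by show u i * (0 : ℝ) = 0; rw [mul_zero]

lemma sum_self_mul {n : ℕ} (v : ES n) : ∑ i, v i * v i = ‖v‖^2 := by
  rw [← sum_sq_eq]
  exact Finset.sum_congr rfl fun i _ => (pow_two (v i)).symm

lemma combine {d hf hg Lf Lg : ℕ}
    (Qf : Matrix (Fin hf) (Fin d) ℝ) (qf : ES hf)
    (Φf : Fin Lf → ES hf → ES hf) (vf : ES hf)
    (Qg : Matrix (Fin hg) (Fin d) ℝ) (qg : ES hg)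
    (Φg : Fin Lg → ES hg → ES hg) (vg : ES hg)
    (hΦf : ∀ ℓ, IsEulerStep (Φf ℓ)) (hvf : ‖vf‖ = 1)
    (hΦg : ∀ ℓ, IsEulerStep (Φg ℓ)) (hvg : ‖vg‖ = 1) :
    ∃ (h L : ℕ) (Qhat : Matrix (Fin h) (Fin d) ℝ) (qhat : ES h)
      (Φ : Fin L → (ES h → ES h)) (vmax vmin : ES h),
      (∀ ℓ, IsEulerStep (Φ ℓ)) ∧ ‖vmax‖ = 1 ∧ ‖vmin‖ = 1 ∧
      ∀ x : ES d,
        (∑ i, vmax i * compChain L Φ (matVec Qhat x + qhat) i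
            = max (∑ i, vf i * compChain Lf Φf (matVec Qf x + qf) i)
                  (∑ i, vg i * compChain Lg Φg (matVec Qg x + qg) i)) ∧
        (∑ i, vmin i * compChain L Φ (matVec Qhat x + qhat) i
            = min (∑ i, vf i * compChain Lf Φf (matVec Qf x + qf) i)
                  (∑ i, vg i * compChain Lg Φg (matVec Qg x + qg) i)) := by
  set s : ℝ := (Real.sqrt 2)⁻¹ with hs_def
  have hsqrt2 : (0:ℝ) < Real.sqrt 2 := Real.sqrt_pos.2 (by norm_num)
  have hs0 : 0 < s := inv_pos.2 hsqrt2
  have hs2 : 2 * s ^ 2 = 1 := by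
    rw [hs_def, inv_pow, Real.sq_sqrt (by norm_num : (0:ℝ) ≤ 2)]
    norm_num
  have h2s : ∀ r : ℝ, 2 * s * (s * r) = r := by
    intro r
    calc 2 * s * (s * r) = (2 * s ^ 2) * r := by ring
      _ = r := by rw [hs2, one_mul]
  set w : ES (hf + hg) := cat ((-s) • vf) (s • vg) with hw_def
  have hw_norm : ‖w‖ = 1 := by
    rw [hw_def, norm_cat, norm_smul, norm_smul, hvf, hvg]
    have e1 : ‖(-s : ℝ)‖ = s := by rw [Real.norm_eq_abs, abs_neg, abs_of_pos hs0]
    have e2 : ‖(s : ℝ)‖ = s := by rw [Real.norm_eq_abs, abs_of_pos hs0]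
    rw [e1, e2, mul_one]
    have e3 : s ^ 2 + s ^ 2 = 1 := by nlinarith [hs2]
    rw [e3, Real.sqrt_one]
  set W : Matrix (Fin 1) (Fin (hf + hg)) ℝ := Matrix.of (fun _ j => w j) with hW_def
  have hW0 : ∀ (z : ES (hf + hg)) (i : Fin 1), matVec W z i = ∑ j, w j * z j := by
    intro z i
    rw [matVec_apply]
    rfl
  have specW : specNorm W ≤ 1 := by
    refine specNorm_le_one fun z => ?_
    rw [norm_euclid]
    have e1 : ∑ i : Fin 1, (matVec W z i)^2 = (matVec W z 0)^2 := by
      rw [Fin.sum_univ_one]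
    rw [e1, Real.sqrt_sq_eq_abs, hW0]
    calc |∑ j, w j * z j| ≤ ‖w‖ * ‖z‖ := abs_sum_mul_le w z
      _ = ‖z‖ := by rw [hw_norm, one_mul]
  set Φs : ES (hf + hg) → ES (hf + hg) :=
    fun z => z - (2:ℝ) • matVec W.transpose (entrywise relu (matVec W z + 0)) with hΦs_def
  have hΦs_step : IsEulerStep Φs :=
    ⟨1, W, 0, 2, by norm_num, le_refl 2, specW, fun z => rfl⟩
  have hΦs_apply : ∀ (z : ES (hf + hg)) (j : Fin (hf + hg)),
      Φs z j = z j - 2 * (w j * relu (∑ c, w c * z c)) := by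
    intro z j
    show (z - (2:ℝ) • matVec W.transpose (entrywise relu (matVec W z + 0))) j = _
    rw [eulerForm_apply]
    congr 1
    congr 1
    rw [Fin.sum_univ_one]
    have h00 : matVec W z 0 + (0 : ES 1) 0 = ∑ c, w c * z c := by
      rw [hW0 z 0]
      exact add_zero _
    rw [h00, hW_def]
    rfl
  set Φbig : Fin (Lf + Lg + 1) → ES (hf + hg) → ES (hf + hg) := fun i =>
    if hi : i.1 < Lf then extL (h2 := hg) (Φf ⟨i.1, hi⟩)
    else if hi2 : i.1 < Lf + Lg then extR (h1 := hf) (Φg ⟨i.1 - Lf, by omega⟩)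
    else Φs with hΦbig_def
  have hbig_lt : ∀ (i : Fin (Lf + Lg + 1)) (hi : i.1 < Lf),
      Φbig i = extL (h2 := hg) (Φf ⟨i.1, hi⟩) := by
    intro i hi
    simp only [hΦbig_def]
    rw [dif_pos hi]
  have hbig_mid : ∀ (i : Fin (Lf + Lg + 1)) (hi1 : ¬ i.1 < Lf) (hi2 : i.1 < Lf + Lg),
      Φbig i = extR (h1 := hf) (Φg ⟨i.1 - Lf, by omega⟩) := by
    intro i hi1 hi2
    simp only [hΦbig_def]
    rw [dif_neg hi1, dif_pos hi2]
  have hbig_last : ∀ (i : Fin (Lf + Lg + 1)) (hi1 : ¬ i.1 < Lf) (hi2 : ¬ i.1 < Lf + Lg),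
      Φbig i = Φs := by
    intro i hi1 hi2
    simp only [hΦbig_def]
    rw [dif_neg hi1, dif_neg hi2]
  refine ⟨hf + hg, Lf + Lg + 1, stack Qf Qg, cat qf qg, Φbig, cat vf (0 : ES hg),
    cat (0 : ES hf) vg, ?_, ?_, ?_, ?_⟩
  · intro ℓ
    by_cases hi : ℓ.1 < Lf
    · rw [hbig_lt ℓ hi]
      exact isEulerStep_extL (hΦf _)
    · by_cases hi2 : ℓ.1 < Lf + Lg
      · rw [hbig_mid ℓ hi hi2]
        exact isEulerStep_extR (hΦg _)
      · rw [hbig_last ℓ hi hi2]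
        exact hΦs_step
  · rw [norm_cat, hvf, norm_zero]
    have : (1:ℝ)^2 + (0:ℝ)^2 = 1 := by norm_num
    rw [this, Real.sqrt_one]
  · rw [norm_cat, hvg, norm_zero]
    have : (0:ℝ)^2 + (1:ℝ)^2 = 1 := by norm_num
    rw [this, Real.sqrt_one]
  · intro x
    set yf : ES hf := matVec Qf x + qf with hyf
    set yg : ES hg := matVec Qg x + qg with hyg
    set uf : ES hf := compChain Lf Φf yf with huf
    set ug : ES hg := compChain Lg Φg yg with hug
    set A : ℝ := ∑ i, vf i * uf i with hA
    set B : ℝ := ∑ i, vg i * ug i with hB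
    have hy : matVec (stack Qf Qg) x + cat qf qg = cat yf yg := by
      rw [matVec_stack, cat_add, hyf, hyg]
    have hchain : compChain (Lf + Lg + 1) Φbig (cat yf yg) = Φs (cat uf ug) := by
      show Φbig (Fin.last (Lf + Lg))
        (compChain (Lf + Lg) (fun i => Φbig i.castSucc) (cat yf yg)) = _
      rw [compChain_append Lf Lg (fun i => Φbig i.castSucc) (cat yf yg)]
      have e1 : (fun i : Fin Lf => Φbig (Fin.castAdd Lg i).castSucc)
          = fun i => extL (h2 := hg) (Φf i) := by
        ext i
        have hv : ((Fin.castAdd Lg i).castSucc : Fin (Lf + Lg + 1)).1 < Lf := i.isLt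
        rw [hbig_lt _ hv]
        rfl
      have e2 : (fun i : Fin Lg => Φbig (Fin.natAdd Lf i).castSucc)
          = fun i => extR (h1 := hf) (Φg i) := by
        ext i
        have hv1 : ¬ ((Fin.natAdd Lf i).castSucc : Fin (Lf + Lg + 1)).1 < Lf := by
          show ¬ (Lf + i.1 < Lf); omega
        have hv2 : ((Fin.natAdd Lf i).castSucc : Fin (Lf + Lg + 1)).1 < Lf + Lg := by
          show Lf + i.1 < Lf + Lg
          have := i.isLt
          omega
        rw [hbig_mid _ hv1 hv2]
        have hidx : (⟨((Fin.natAdd Lf i).castSucc : Fin (Lf + Lg + 1)).1 - Lf,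
            show ((Fin.natAdd Lf i).castSucc : Fin (Lf + Lg + 1)).1 - Lf < Lg from
              show Lf + i.1 - Lf < Lg by have := i.isLt; omega⟩ : Fin Lg) = i := by
          apply Fin.ext
          show Lf + i.1 - Lf = i.1
          omega
        rw [hidx]
      have hlast : ¬ ((Fin.last (Lf + Lg)).1 < Lf) ∧ ¬ ((Fin.last (Lf + Lg)).1 < Lf + Lg) := by
        constructor <;> · show ¬ (Lf + Lg < _); omega
      beta_reduce
      rw [e1, e2, compChain_extL Lf Φf yf yg, compChain_extR Lg Φg uf yg,
        hbig_last _ hlast.1 hlast.2]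
    have hz := hΦs_apply (cat uf ug)
    set S : ℝ := ∑ c, w c * cat uf ug c with hS_def
    have hS : S = s * (B - A) := by
      rw [hS_def, hw_def, sum_cat_mul, sum_smul_mul, sum_smul_mul, hA, hB]
      ring
    constructor
    · rw [hy, hchain]
      have T1 : ∑ j, cat vf (0 : ES hg) j * cat uf ug j = A := by
        rw [sum_cat_mul, sum_zero_mul, hA, add_zero]
      have T2 : ∑ j, cat vf (0 : ES hg) j * w j = -s := by
        rw [hw_def, sum_cat_mul, sum_mul_smul, sum_mul_smul, sum_zero_mul, mul_zero,
          sum_self_mul, hvf]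
        norm_num
      calc ∑ j, cat vf (0 : ES hg) j * Φs (cat uf ug) j
          = ∑ j, (cat vf (0 : ES hg) j * cat uf ug j
              - (2 * relu S) * (cat vf (0 : ES hg) j * w j)) := by
            refine Finset.sum_congr rfl fun j _ => ?_
            rw [hz j]
            ring
        _ = (∑ j, cat vf (0 : ES hg) j * cat uf ug j)
              - (2 * relu S) * ∑ j, cat vf (0 : ES hg) j * w j := by
            rw [Finset.sum_sub_distrib, Finset.mul_sum]
        _ = A - (2 * relu S) * (-s) := by rw [T1, T2]
        _ = A + 2 * s * relu S := by ring
        _ = A + relu (B - A) := by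
            rw [hS, relu_const_mul s _ (le_of_lt hs0), h2s]
        _ = max A B := add_relu_sub A B
    · rw [hy, hchain]
      have T1 : ∑ j, cat (0 : ES hf) vg j * cat uf ug j = B := by
        rw [sum_cat_mul, sum_zero_mul, hB, zero_add]
      have T2 : ∑ j, cat (0 : ES hf) vg j * w j = s := by
        rw [hw_def, sum_cat_mul, sum_mul_smul, sum_mul_smul, sum_zero_mul, mul_zero,
          sum_self_mul, hvg]
        norm_num
      calc ∑ j, cat (0 : ES hf) vg j * Φs (cat uf ug) j
          = ∑ j, (cat (0 : ES hf) vg j * cat uf ug j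
              - (2 * relu S) * (cat (0 : ES hf) vg j * w j)) := by
            refine Finset.sum_congr rfl fun j _ => ?_
            rw [hz j]
            ring
        _ = (∑ j, cat (0 : ES hf) vg j * cat uf ug j)
              - (2 * relu S) * ∑ j, cat (0 : ES hf) vg j * w j := by
            rw [Finset.sum_sub_distrib, Finset.mul_sum]
        _ = B - (2 * relu S) * s := by rw [T1, T2]
        _ = B - 2 * s * relu S := by ring
        _ = B - relu (B - A) := by
            rw [hS, relu_const_mul s _ (le_of_lt hs0), h2s]
        _ = min A B := sub_relu_sub A B

end Stmt4Aux
end Aux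

/-- `G_{d,ReLU}(X,ℝ)` is a lattice: it is closed under pointwise
maximum and minimum. -/
theorem stmt4 (d : ℕ) (X : Set (EuclideanSpace ℝ (Fin d)))
    (f g : EuclideanSpace ℝ (Fin d) → ℝ) (hf : InG X f) (hg : InG X g) :
    InG X (fun x => max (f x) (g x)) ∧ InG X (fun x => min (f x) (g x)) := by
  obtain ⟨hfl, hwf, Lf, Qf, qf, Φf, vf, hΦf, hvf, hreprf⟩ := hf
  obtain ⟨hgl, hwg, Lg, Qg, qg, Φg, vg, hΦg, hvg, hreprg⟩ := hg
  obtain ⟨h, L, Qhat, qhat, Φ, vmax, vmin, hΦ, hnmax, hnmin, hval⟩ :=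
    Stmt4Aux.combine Qf qf Φf vf Qg qg Φg vg hΦf hvf hΦg hvg
  constructor
  · refine ⟨?_, h, L, Qhat, qhat, Φ, vmax, hΦ, hnmax, ?_⟩
    · rw [lipschitzOnWith_iff_dist_le_mul]
      intro x hx y hy
      have h1 := lipschitzOnWith_iff_dist_le_mul.1 hfl x hx y hy
      have h2 := lipschitzOnWith_iff_dist_le_mul.1 hgl x hx y hy
      rw [NNReal.coe_one, Real.dist_eq, one_mul] at h1 h2 ⊢
      exact (abs_max_sub_max_le_max _ _ _ _).trans (max_le h1 h2)
    · intro x hx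
      show max (f x) (g x) = _
      rw [(hval x).1, ← hreprf x hx, ← hreprg x hx]
  · refine ⟨?_, h, L, Qhat, qhat, Φ, vmin, hΦ, hnmin, ?_⟩
    · rw [lipschitzOnWith_iff_dist_le_mul]
      intro x hx y hy
      have h1 := lipschitzOnWith_iff_dist_le_mul.1 hfl x hx y hy
      have h2 := lipschitzOnWith_iff_dist_le_mul.1 hgl x hx y hy
      rw [NNReal.coe_one, Real.dist_eq, one_mul] at h1 h2 ⊢
      exact (abs_min_sub_min_le_max _ _ _ _).trans (max_le h1 h2)
    · intro x hx
      show min (f x) (g x) = _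
      rw [(hval x).2, ← hreprf x hx, ← hreprg x hx]
end

section
/- Let d, k ∈ ℕ, l₁, …, l_k ∈ ℕ, and let a_{i,j} ∈ ℝ^d with ‖a_{i,j}‖₂ ≤ 1 and b_{i,j} ∈ ℝ for i = 1,…,k, j = 1,…,l_i. Define f : ℝ^d → ℝ by f(x) = max_{1≤i≤k} min_{1≤j≤l_i} (a_{i,j}ᵀ x + b_{i,j}) (the general form of a piecewise affine 1-Lipschitz function). Then there exist h, L ∈ ℕ, an affine map Q(x) = Q̂x + q̂ with Q̂ ∈ ℝ^{h×d}, q̂ ∈ ℝ^h, layers Φ₁, …, Φ_L ∈ E_{h,σ} with σ = ReLU, and v ∈ ℝ^h with ‖v‖₂ = 1, such that f(x) = vᵀ (Φ_L ∘ ⋯ ∘ Φ₁)(Q(x)) for all x ∈ ℝ^d; moreover f is 1-Lipschitz, so f ∈ G_{d,σ}(ℝ^d,ℝ). -/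
open scoped BigOperators

noncomputable section Stmt7Aux

namespace Stmt7Aux

open List

abbrev ES (h : ℕ) := EuclideanSpace ℝ (Fin h)

lemma matVec_apply {m n : ℕ} (W : Matrix (Fin m) (Fin n) ℝ) (x : ES n) (i : Fin m) :
    matVec W x i = ∑ j, W i j * x j := by
  simp [matVec, Matrix.toEuclideanLin_apply, Matrix.mulVec, dotProduct]

lemma sub_max_sub_zero (a b : ℝ) : a - max (a - b) 0 = min a b := by
  rcases le_total a b with h | h
  · rw [max_eq_right (sub_nonpos.mpr h), min_eq_left h]; ring
  · rw [max_eq_left (sub_nonneg.mpr h), min_eq_right h]; ring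

lemma add_max_sub_zero (a b : ℝ) : b + max (a - b) 0 = max a b := by
  rcases le_total a b with h | h
  · rw [max_eq_right (sub_nonpos.mpr h), max_eq_right h]; ring
  · rw [max_eq_left (sub_nonneg.mpr h), max_eq_left h]; ring

/-- The comparator map: writes `min` to coordinate `p` and `max` to coordinate `q`. -/
def cmp {h : ℕ} (p q : Fin h) (x : ES h) : ES h :=
  WithLp.toLp 2 (fun r => if r = p then min (x p) (x q) else if r = q then max (x p) (x q) else x r)

lemma cmp_fst {h : ℕ} {p q : Fin h} (x : ES h) : cmp p q x p = min (x p) (x q) := by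
  simp [cmp]

lemma cmp_snd {h : ℕ} {p q : Fin h} (hpq : p ≠ q) (x : ES h) :
    cmp p q x q = max (x p) (x q) := by
  simp [cmp, Ne.symm hpq]

lemma cmp_other {h : ℕ} {p q r : Fin h} (hp : r ≠ p) (hq : r ≠ q) (x : ES h) :
    cmp p q x r = x r := by
  simp [cmp, hp, hq]

lemma isEulerStep_cmp {h : ℕ} {p q : Fin h} (hpq : p ≠ q) : IsEulerStep (cmp p q) := by
  classical
  set s : ℝ := (Real.sqrt 2)⁻¹ with hsdef
  have hs0 : 0 < s := by positivity
  have hss : s * s = 1 / 2 := by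
    rw [hsdef, ← mul_inv, Real.mul_self_sqrt (by norm_num)]
    norm_num
  set w : Fin h → ℝ := fun j => if j = p then s else if j = q then -s else 0 with hwdef
  set W : Matrix (Fin 1) (Fin h) ℝ := fun _ j => w j with hWdef
  have hsum : ∀ x : ES h, ∑ j, w j * x j = s * (x p - x q) := by
    intro x
    have hterm : ∀ j, w j * x j =
        (if j = p then s * x j else 0) + (if j = q then -s * x j else 0) := by
      intro j
      by_cases h1 : j = p
      · subst h1; simp [hwdef, hpq]
      · by_cases h2 : j = q
        · subst h2; simp [hwdef, h1]
        · simp [hwdef, h1, h2]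
    rw [Finset.sum_congr rfl fun j _ => hterm j, Finset.sum_add_distrib,
      Finset.sum_ite_eq' Finset.univ p (fun j => s * x j),
      Finset.sum_ite_eq' Finset.univ q (fun j => -s * x j)]
    simp; ring
  have hWx : ∀ (x : ES h) (i : Fin 1), matVec W x i = s * (x p - x q) := by
    intro x i
    rw [matVec_apply]
    exact hsum x
  refine ⟨1, W, 0, 2, by norm_num, by norm_num, ?_, ?_⟩
  · -- spectral norm bound
    apply ContinuousLinearMap.opNorm_le_bound _ zero_le_one
    intro x
    have happ : (LinearMap.toContinuousLinearMap (Matrix.toEuclideanLin W)) x = matVec W x := rfl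
    rw [happ, EuclideanSpace.norm_eq, Fin.sum_univ_one, hWx x 0]
    have hxpq : x p ^ 2 + x q ^ 2 ≤ ‖x‖ ^ 2 := by
      rw [EuclideanSpace.norm_eq, Real.sq_sqrt (by positivity)]
      calc x p ^ 2 + x q ^ 2 = ∑ i ∈ ({p, q} : Finset (Fin h)), ‖x i‖ ^ 2 := by
            rw [Finset.sum_pair hpq]
            simp [Real.norm_eq_abs, sq_abs]
        _ ≤ ∑ i, ‖x i‖ ^ 2 :=
            Finset.sum_le_sum_of_subset_of_nonneg (Finset.subset_univ _)
              (fun i _ _ => by positivity)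
    have h1 : (s * (x p - x q)) ^ 2 ≤ ‖x‖ ^ 2 := by
      nlinarith [sq_nonneg (x p + x q), sq_nonneg (x p - x q)]
    calc Real.sqrt (‖s * (x p - x q)‖ ^ 2) = Real.sqrt ((s * (x p - x q)) ^ 2) := by
          rw [Real.norm_eq_abs, sq_abs]
      _ ≤ Real.sqrt (‖x‖ ^ 2) := Real.sqrt_le_sqrt h1
      _ = ‖x‖ := Real.sqrt_sq (norm_nonneg x)
      _ ≤ 1 * ‖x‖ := by rw [one_mul]
  · -- the formula
    intro x
    ext r
    have hrhs : (x - (2 : ℝ) • matVec W.transpose (entrywise relu (matVec W x + 0))) r =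
        x r - 2 * (w r * max (s * (x p - x q)) 0) := by
      rw [PiLp.sub_apply, PiLp.smul_apply, smul_eq_mul]
      congr 2
      rw [matVec_apply]
      rw [Fin.sum_univ_one]
      have : entrywise relu (matVec W x + 0) 0 = max (s * (x p - x q)) 0 := by
        show relu ((matVec W x + 0) 0) = _
        rw [PiLp.add_apply, PiLp.zero_apply, add_zero, hWx x 0]
        rfl
      rw [this]
      rfl
    rw [hrhs]
    by_cases h1 : r = p
    · subst h1
      rw [cmp_fst]
      have hw : w r = s := by simp [hwdef]
      have hmax : 2 * (s * max (s * (x r - x q)) 0) = max (x r - x q) 0 := by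
        rcases le_total (x r - x q) 0 with ht | ht
        · rw [max_eq_right (by nlinarith : s * (x r - x q) ≤ 0), max_eq_right ht]
          ring
        · rw [max_eq_left (by positivity : 0 ≤ s * (x r - x q)), max_eq_left ht]
          linear_combination (2 * (x r - x q)) * hss
      rw [hw, hmax, sub_max_sub_zero]
    · by_cases h2 : r = q
      · subst h2
        rw [cmp_snd hpq]
        have hw : w r = -s := by simp [hwdef, Ne.symm hpq]
        have hmax : 2 * (-s * max (s * (x p - x r)) 0) = -max (x p - x r) 0 := by
          rcases le_total (x p - x r) 0 with ht | ht
          · rw [max_eq_right (by nlinarith : s * (x p - x r) ≤ 0), max_eq_right ht]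
            ring
          · rw [max_eq_left (by positivity : 0 ≤ s * (x p - x r)), max_eq_left ht]
            linear_combination (-2 * (x p - x r)) * hss
        rw [hw, hmax]
        rw [sub_neg_eq_add, add_max_sub_zero]
      · rw [cmp_other h1 h2]
        have hw : w r = 0 := by simp [hwdef, h1, h2]
        rw [hw]
        ring

/-! ### Folding a list of maps -/

def fold {α : Type*} (fs : List (α → α)) (x : α) : α := fs.foldl (fun y f => f y) x

lemma fold_nil {α : Type*} (x : α) : fold [] x = x := rfl

lemma fold_cons {α : Type*} (f : α → α) (fs : List (α → α)) (x : α) :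
    fold (f :: fs) x = fold fs (f x) := rfl

lemma fold_append {α : Type*} (A B : List (α → α)) (x : α) :
    fold (A ++ B) x = fold B (fold A x) := List.foldl_append

lemma compChain_cast {α : Type*} {L L' : ℕ} (hL : L = L') (Φ : Fin L' → α → α) (x : α) :
    compChain L (fun i => Φ (Fin.cast hL i)) x = compChain L' Φ x := by
  subst hL; rfl

lemma compChain_eq_fold {α : Type*} (fs : List (α → α)) (x : α) :
    compChain fs.length (fun i => fs.get i) x = fold fs x := by
  induction fs using List.reverseRecOn generalizing x with
  | nil => rfl
  | append_singleton fs f ih =>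
    have hL : fs.length + 1 = (fs ++ [f]).length := by simp
    rw [← compChain_cast hL (fun i => (fs ++ [f]).get i) x]
    show (fs ++ [f]).get (Fin.cast hL (Fin.last fs.length))
        (compChain fs.length (fun i => (fs ++ [f]).get (Fin.cast hL i.castSucc)) x) =
      fold (fs ++ [f]) x
    have h1 : (fs ++ [f]).get (Fin.cast hL (Fin.last fs.length)) = f := by
      rw [List.get_eq_getElem]
      exact List.getElem_concat_length rfl _
    have h3 : (fun i : Fin fs.length => (fs ++ [f]).get (Fin.cast hL i.castSucc)) =
        fun i => fs.get i := by
      funext i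
      rw [List.get_eq_getElem, List.get_eq_getElem]
      exact List.getElem_append_left i.isLt
    rw [h1, h3, ih, fold_append]
    rfl

/-! ### foldr with min/max -/

section Foldr

variable {ι : Type*}

lemma foldr_min_le_init (g : ι → ℝ) : ∀ (l : List ι) (a : ℝ),
    l.foldr (fun q m => min (g q) m) a ≤ a
  | [], a => le_refl a
  | q :: l, a => le_trans (min_le_right _ _) (foldr_min_le_init g l a)

lemma foldr_min_le_mem (g : ι → ℝ) {q : ι} : ∀ {l : List ι} (a : ℝ), q ∈ l →
    l.foldr (fun q m => min (g q) m) a ≤ g q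
  | q' :: l, a, hm => by
    rcases List.mem_cons.mp hm with rfl | hm'
    · exact min_le_left _ _
    · exact le_trans (min_le_right _ _) (foldr_min_le_mem g a hm')

lemma le_foldr_min (g : ι → ℝ) {c : ℝ} : ∀ (l : List ι) (a : ℝ), c ≤ a → (∀ q ∈ l, c ≤ g q) →
    c ≤ l.foldr (fun q m => min (g q) m) a
  | [], a, ha, _ => ha
  | q :: l, a, ha, hq => le_min (hq q (List.mem_cons_self))
      (le_foldr_min g l a ha fun q' hq' => hq q' (List.mem_cons_of_mem _ hq'))

lemma foldr_min_comm (g : ι → ℝ) : ∀ (l : List ι) (a b : ℝ),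
    l.foldr (fun q m => min (g q) m) (min a b) = min b (l.foldr (fun q m => min (g q) m) a)
  | [], a, b => min_comm a b
  | q :: l, a, b => by
    show min (g q) (l.foldr _ (min a b)) = min b (min (g q) (l.foldr _ a))
    rw [foldr_min_comm g l a b, min_left_comm]

lemma foldr_min_congr {g g' : ι → ℝ} : ∀ (l : List ι), (∀ q ∈ l, g q = g' q) → ∀ (a : ℝ),
    l.foldr (fun q m => min (g q) m) a = l.foldr (fun q m => min (g' q) m) a
  | [], _, a => rfl
  | q :: l, hg, a => by
    show min (g q) (l.foldr _ a) = min (g' q) (l.foldr _ a)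
    rw [hg q (List.mem_cons_self),
      foldr_min_congr l (fun q' hq' => hg q' (List.mem_cons_of_mem _ hq')) a]

lemma le_foldr_max (g : ι → ℝ) : ∀ (l : List ι) (a : ℝ),
    a ≤ l.foldr (fun q m => max (g q) m) a
  | [], a => le_refl a
  | q :: l, a => le_trans (le_foldr_max g l a) (le_max_right _ _)

lemma mem_le_foldr_max (g : ι → ℝ) {q : ι} : ∀ {l : List ι} (a : ℝ), q ∈ l →
    g q ≤ l.foldr (fun q m => max (g q) m) a
  | q' :: l, a, hm => by
    rcases List.mem_cons.mp hm with rfl | hm'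
    · exact le_max_left _ _
    · exact le_trans (mem_le_foldr_max g a hm') (le_max_right _ _)

lemma foldr_max_le (g : ι → ℝ) {c : ℝ} : ∀ (l : List ι) (a : ℝ), a ≤ c → (∀ q ∈ l, g q ≤ c) →
    l.foldr (fun q m => max (g q) m) a ≤ c
  | [], a, ha, _ => ha
  | q :: l, a, ha, hq => max_le (hq q (List.mem_cons_self))
      (foldr_max_le g l a ha fun q' hq' => hq q' (List.mem_cons_of_mem _ hq'))

lemma foldr_max_comm (g : ι → ℝ) : ∀ (l : List ι) (a b : ℝ),
    l.foldr (fun q m => max (g q) m) (max a b) = max b (l.foldr (fun q m => max (g q) m) a)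
  | [], a, b => max_comm a b
  | q :: l, a, b => by
    show max (g q) (l.foldr _ (max a b)) = max b (max (g q) (l.foldr _ a))
    rw [foldr_max_comm g l a b, max_left_comm]

lemma foldr_max_congr {g g' : ι → ℝ} : ∀ (l : List ι), (∀ q ∈ l, g q = g' q) → ∀ (a : ℝ),
    l.foldr (fun q m => max (g q) m) a = l.foldr (fun q m => max (g' q) m) a
  | [], _, a => rfl
  | q :: l, hg, a => by
    show max (g q) (l.foldr _ a) = max (g' q) (l.foldr _ a)
    rw [hg q (List.mem_cons_self),
      foldr_max_congr l (fun q' hq' => hg q' (List.mem_cons_of_mem _ hq')) a]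

end Foldr

lemma mem_drop_one_finRange_ne {n : ℕ} (hn : 0 < n) (j : Fin n)
    (hj : j ∈ (List.finRange n).drop 1) : j ≠ ⟨0, hn⟩ := by
  obtain ⟨m, rfl⟩ : ∃ m, n = m + 1 := ⟨n - 1, by omega⟩
  rw [List.finRange_succ] at hj
  simp only [List.drop_succ_cons, List.drop_zero] at hj
  obtain ⟨j', -, rfl⟩ := List.mem_map.mp hj
  exact Fin.succ_ne_zero j'

lemma foldr_min_eq_inf' {n : ℕ} (hn : 0 < n) (g : Fin n → ℝ) :
    ((List.finRange n).drop 1).foldr (fun j m => min (g j) m) (g ⟨0, hn⟩) =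
      Finset.univ.inf' ⟨⟨0, hn⟩, Finset.mem_univ _⟩ g := by
  have hmem : ∀ j : Fin n, j ≠ ⟨0, hn⟩ → j ∈ (List.finRange n).drop 1 := by
    obtain ⟨m, rfl⟩ : ∃ m, n = m + 1 := ⟨n - 1, by omega⟩
    intro j hj
    rw [List.finRange_succ]
    simp only [List.drop_succ_cons, List.drop_zero]
    obtain ⟨j', rfl⟩ := Fin.eq_succ_of_ne_zero hj
    exact List.mem_map_of_mem (List.mem_finRange _)
  apply _root_.le_antisymm
  · apply Finset.le_inf'
    intro j _
    by_cases hj : j = ⟨0, hn⟩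
    · subst hj; exact foldr_min_le_init g _ _
    · exact foldr_min_le_mem g _ (hmem j hj)
  · exact le_foldr_min g _ _ (Finset.inf'_le _ (Finset.mem_univ _))
      (fun q _ => Finset.inf'_le _ (Finset.mem_univ _))

lemma foldr_max_eq_sup' {n : ℕ} (hn : 0 < n) (g : Fin n → ℝ) :
    ((List.finRange n).drop 1).foldr (fun j m => max (g j) m) (g ⟨0, hn⟩) =
      Finset.univ.sup' ⟨⟨0, hn⟩, Finset.mem_univ _⟩ g := by
  have hmem : ∀ j : Fin n, j ≠ ⟨0, hn⟩ → j ∈ (List.finRange n).drop 1 := by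
    obtain ⟨m, rfl⟩ : ∃ m, n = m + 1 := ⟨n - 1, by omega⟩
    intro j hj
    rw [List.finRange_succ]
    simp only [List.drop_succ_cons, List.drop_zero]
    obtain ⟨j', rfl⟩ := Fin.eq_succ_of_ne_zero hj
    exact List.mem_map_of_mem (List.mem_finRange _)
  apply _root_.le_antisymm
  · exact foldr_max_le g _ _ (Finset.le_sup' _ (Finset.mem_univ _))
      (fun q _ => Finset.le_sup' _ (Finset.mem_univ _))
  · apply Finset.sup'_le
    intro j _
    by_cases hj : j = ⟨0, hn⟩
    · subst hj; exact le_foldr_max g _ _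
    · exact mem_le_foldr_max g _ (hmem j hj)

/-! ### Folding comparators -/

lemma fold_min_spec {h : ℕ} (p : Fin h) : ∀ (js : List (Fin h)) (x : ES h),
    p ∉ js → js.Nodup →
    (fold (js.map (fun q => cmp p q)) x p = js.foldr (fun q m => min (x q) m) (x p)) ∧
    (∀ r, r ≠ p → r ∉ js → fold (js.map (fun q => cmp p q)) x r = x r)
  | [], x, _, _ => ⟨rfl, fun _ _ _ => rfl⟩
  | q :: js, x, hp, hnd => by
    have hqp : q ≠ p := by rintro rfl; exact hp (List.mem_cons_self)
    obtain ⟨hq_not, hnd'⟩ := List.nodup_cons.mp hnd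
    have hp' : p ∉ js := fun h' => hp (List.mem_cons_of_mem _ h')
    set x' := cmp p q x with hx'
    have hxp : x' p = min (x p) (x q) := cmp_fst x
    have hother : ∀ r, r ≠ p → r ≠ q → x' r = x r := fun r h1 h2 => cmp_other h1 h2 x
    obtain ⟨ih1, ih2⟩ := fold_min_spec p js x' hp' hnd'
    simp only [List.map_cons, fold_cons]
    constructor
    · rw [ih1, hxp]
      rw [foldr_min_congr js (fun q' hq' => hother q'
          (fun he => hp' (he ▸ hq')) (fun he => hq_not (he ▸ hq'))) _]
      show js.foldr (fun q' m => min (x q') m) (min (x p) (x q)) =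
        min (x q) (js.foldr (fun q' m => min (x q') m) (x p))
      exact foldr_min_comm x js (x p) (x q)
    · intro r hrp hrm
      rw [ih2 r hrp (fun h' => hrm (List.mem_cons_of_mem _ h'))]
      exact hother r hrp (fun he => hrm (he ▸ List.mem_cons_self))

lemma fold_max_spec {h : ℕ} (p : Fin h) : ∀ (js : List (Fin h)) (x : ES h),
    p ∉ js → js.Nodup →
    (fold (js.map (fun q => cmp q p)) x p = js.foldr (fun q m => max (x q) m) (x p)) ∧
    (∀ r, r ≠ p → r ∉ js → fold (js.map (fun q => cmp q p)) x r = x r)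
  | [], x, _, _ => ⟨rfl, fun _ _ _ => rfl⟩
  | q :: js, x, hp, hnd => by
    have hqp : q ≠ p := by rintro rfl; exact hp (List.mem_cons_self)
    obtain ⟨hq_not, hnd'⟩ := List.nodup_cons.mp hnd
    have hp' : p ∉ js := fun h' => hp (List.mem_cons_of_mem _ h')
    set x' := cmp q p x with hx'
    have hxp : x' p = max (x p) (x q) := by
      rw [hx', cmp_snd hqp x, max_comm]
    have hother : ∀ r, r ≠ p → r ≠ q → x' r = x r := fun r h1 h2 => cmp_other h2 h1 x
    obtain ⟨ih1, ih2⟩ := fold_max_spec p js x' hp' hnd'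
    simp only [List.map_cons, fold_cons]
    constructor
    · rw [ih1, hxp]
      rw [foldr_max_congr js (fun q' hq' => hother q'
          (fun he => hp' (he ▸ hq')) (fun he => hq_not (he ▸ hq'))) _]
      show js.foldr (fun q' m => max (x q') m) (max (x p) (x q)) =
        max (x q) (js.foldr (fun q' m => max (x q') m) (x p))
      exact foldr_max_comm x js (x p) (x q)
    · intro r hrp hrm
      rw [ih2 r hrp (fun h' => hrm (List.mem_cons_of_mem _ h'))]
      exact hother r hrp (fun he => hrm (he ▸ List.mem_cons_self))

lemma fold_blocks {h k : ℕ} (hd : Fin k → Fin h) (tl : Fin k → List (Fin h))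
    (inB : Fin k → Fin h → Prop)
    (hhd : ∀ i, inB i (hd i)) (htl : ∀ i q, q ∈ tl i → inB i q)
    (hdisj : ∀ i i' r, i ≠ i' → inB i r → ¬ inB i' r)
    (hnotin : ∀ i, hd i ∉ tl i) (hndtl : ∀ i, (tl i).Nodup) :
    ∀ (is : List (Fin k)) (x : ES h), is.Nodup →
    (∀ i ∈ is, fold ((is.map (fun i => (tl i).map (fun q => cmp (hd i) q))).flatten) x (hd i)
       = (tl i).foldr (fun q m => min (x q) m) (x (hd i))) ∧
    (∀ r, (∀ i ∈ is, ¬ inB i r) →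
      fold ((is.map (fun i => (tl i).map (fun q => cmp (hd i) q))).flatten) x r = x r)
  | [], x, _ => ⟨fun i hi => absurd hi List.not_mem_nil, fun r _ => rfl⟩
  | i :: is, x, hnd_is => by
    obtain ⟨hi_nm, hnd'⟩ := List.nodup_cons.mp hnd_is
    simp only [List.map_cons, List.flatten_cons, fold_append]
    set x₁ := fold ((tl i).map (fun q => cmp (hd i) q)) x with hx₁
    obtain ⟨f1, f2⟩ := fold_min_spec (hd i) (tl i) x (hnotin i) (hndtl i)
    have huntouched : ∀ r, ¬ inB i r → x₁ r = x r := fun r hr =>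
      f2 r (fun e => hr (e ▸ hhd i)) (fun m => hr (htl i r m))
    obtain ⟨g1, g2⟩ := fold_blocks hd tl inB hhd htl hdisj hnotin hndtl is x₁ hnd'
    constructor
    · intro i' hmem
      rcases List.mem_cons.mp hmem with rfl | hmem'
      · rw [g2 (hd i') (fun i'' hm => hdisj i' i'' (hd i')
            (by rintro rfl; exact hi_nm hm) (hhd i')), hx₁, f1]
      · have hne : i ≠ i' := by rintro rfl; exact hi_nm hmem'
        rw [g1 i' hmem']
        rw [foldr_min_congr (tl i') (fun q hq =>
            huntouched q (hdisj i' i q (Ne.symm hne) (htl i' q hq))) _,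
          huntouched (hd i') (hdisj i' i _ (Ne.symm hne) (hhd i'))]
    · intro r hr
      rw [g2 r (fun i' hm => hr i' (List.mem_cons_of_mem _ hm)),
        huntouched r (hr i (List.mem_cons_self))]

/-! ### Lipschitz lemmas -/

lemma lip_inf' {ι X : Type*} [PseudoEMetricSpace X] (s : Finset ι) (hs : s.Nonempty)
    (F : ι → X → ℝ) :
    (∀ i ∈ s, LipschitzWith 1 (F i)) → LipschitzWith 1 (fun x => s.inf' hs (fun i => F i x)) := by
  induction hs using Finset.Nonempty.cons_induction with
  | singleton a =>
    intro hF
    simpa only [Finset.inf'_singleton] using hF a (Finset.mem_singleton_self a)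
  | cons a s h hs ih =>
    intro hF
    have heq : (fun x => (Finset.cons a s h).inf' (Finset.cons_nonempty h) (fun i => F i x)) =
        fun x => min (F a x) (s.inf' hs (fun i => F i x)) := by
      funext x
      exact Finset.inf'_cons hs (fun i => F i x)
    rw [heq]
    have h1 := hF a (Finset.mem_cons_self a s)
    have h2 := ih fun i hi => hF i (Finset.mem_cons.mpr (Or.inr hi))
    simpa using h1.min h2

lemma lip_sup' {ι X : Type*} [PseudoEMetricSpace X] (s : Finset ι) (hs : s.Nonempty)
    (F : ι → X → ℝ) :
    (∀ i ∈ s, LipschitzWith 1 (F i)) → LipschitzWith 1 (fun x => s.sup' hs (fun i => F i x)) := by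
  induction hs using Finset.Nonempty.cons_induction with
  | singleton a =>
    intro hF
    simpa only [Finset.sup'_singleton] using hF a (Finset.mem_singleton_self a)
  | cons a s h hs ih =>
    intro hF
    have heq : (fun x => (Finset.cons a s h).sup' (Finset.cons_nonempty h) (fun i => F i x)) =
        fun x => max (F a x) (s.sup' hs (fun i => F i x)) := by
      funext x
      exact Finset.sup'_cons hs (fun i => F i x)
    rw [heq]
    have h1 := hF a (Finset.mem_cons_self a s)
    have h2 := ih fun i hi => hF i (Finset.mem_cons.mpr (Or.inr hi))
    simpa using h1.max h2

lemma lip_affine {d : ℕ} (c : ES d) (β : ℝ) (hc : ‖c‖ ≤ 1) :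
    LipschitzWith 1 (fun x : ES d => (∑ t, c t * x t) + β) := by
  apply LipschitzWith.of_dist_le_mul
  intro x y
  rw [Real.dist_eq, dist_eq_norm]
  have hdiff : ((∑ t, c t * x t) + β) - ((∑ t, c t * y t) + β) = ∑ t, c t * (x t - y t) := by
    simp only [mul_sub, Finset.sum_sub_distrib]
    ring
  rw [hdiff]
  have h2 : ∑ t, c t * (x t - y t) = (inner ℝ c (x - y) : ℝ) := by
    simp [PiLp.inner_apply, PiLp.sub_apply, RCLike.inner_apply, conj_trivial, mul_comm]
  rw [h2]
  calc |(inner ℝ c (x - y) : ℝ)| ≤ ‖c‖ * ‖x - y‖ := abs_real_inner_le_norm _ _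
    _ ≤ 1 * ‖x - y‖ := mul_le_mul_of_nonneg_right hc (norm_nonneg _)
    _ = ↑1 * ‖x - y‖ := by norm_num

end Stmt7Aux

/-- Every max–min combination of `1`-Lipschitz affine functions (the general
piecewise affine `1`-Lipschitz function) is `1`-Lipschitz and is represented exactly by a
network `vᵀ ∘ Φ_L ∘ ⋯ ∘ Φ₁ ∘ Q` with layers in `E_{h,ReLU}` and `‖v‖₂ = 1`, i.e. it belongs
to `G_{d,ReLU}(ℝ^d,ℝ)`. -/
theorem stmt7 (d k : ℕ) (hk : 0 < k) (l : Fin k → ℕ) (hl : ∀ i, 0 < l i)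
    (a : (i : Fin k) → Fin (l i) → EuclideanSpace ℝ (Fin d))
    (b : (i : Fin k) → Fin (l i) → ℝ)
    (ha : ∀ i j, ‖a i j‖ ≤ 1) :
    LipschitzWith 1 (fun x : EuclideanSpace ℝ (Fin d) =>
      Finset.univ.sup' ⟨⟨0, hk⟩, Finset.mem_univ _⟩ fun i =>
        Finset.univ.inf' ⟨⟨0, hl i⟩, Finset.mem_univ _⟩ fun j => (∑ t, a i j t * x t) + b i j) ∧
    InG (Set.univ : Set (EuclideanSpace ℝ (Fin d)))
      (fun x => Finset.univ.sup' ⟨⟨0, hk⟩, Finset.mem_univ _⟩ fun i =>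
        Finset.univ.inf' ⟨⟨0, hl i⟩, Finset.mem_univ _⟩ fun j => (∑ t, a i j t * x t) + b i j) := by
  classical
  have hlip : LipschitzWith 1 (fun x : EuclideanSpace ℝ (Fin d) =>
      Finset.univ.sup' ⟨⟨0, hk⟩, Finset.mem_univ _⟩ fun i =>
        Finset.univ.inf' ⟨⟨0, hl i⟩, Finset.mem_univ _⟩ fun j =>
          (∑ t, a i j t * x t) + b i j) := by
    apply Stmt7Aux.lip_sup'
    intro i _
    apply Stmt7Aux.lip_inf'
    intro j _
    exact Stmt7Aux.lip_affine (a i j) (b i j) (ha i j)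
  refine ⟨hlip, hlip.lipschitzOnWith, ?_⟩
  -- the sigma index type and its enumeration
  set σT := ((i : Fin k) × Fin (l i)) with hσT
  let e : σT ≃ Fin (Fintype.card σT) := Fintype.equivFin σT
  set h := Fintype.card σT with hh
  have einj : Function.Injective e := e.injective
  -- heads, tails, blocks
  let hd : Fin k → Fin h := fun i => e ⟨i, ⟨0, hl i⟩⟩
  let tl : Fin k → List (Fin h) := fun i => ((List.finRange (l i)).drop 1).map (fun j => e ⟨i, j⟩)
  let inB : Fin k → Fin h → Prop := fun i r => ∃ j, r = e ⟨i, j⟩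
  have hhd : ∀ i, inB i (hd i) := fun i => ⟨_, rfl⟩
  have htl : ∀ i q, q ∈ tl i → inB i q := by
    intro i q hq
    obtain ⟨j, -, rfl⟩ := List.mem_map.mp hq
    exact ⟨j, rfl⟩
  have hdisj : ∀ i i' r, i ≠ i' → inB i r → ¬ inB i' r := by
    rintro i i' r hne ⟨j, rfl⟩ ⟨j', he⟩
    exact hne (congrArg Sigma.fst (einj he))
  have hfst : ∀ {i i' : Fin k} {j : Fin (l i)} {j' : Fin (l i')},
      e ⟨i, j⟩ = e ⟨i', j'⟩ → i = i' := by
    intro i i' j j' he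
    exact congrArg Sigma.fst (einj he)
  have hsnd : ∀ {i : Fin k} {j j' : Fin (l i)}, e ⟨i, j⟩ = e ⟨i, j'⟩ → j = j' := by
    intro i j j' he
    have := einj he
    rwa [Sigma.mk.inj_iff, heq_eq_eq, eq_self_iff_true, true_and] at this
  have hnotin : ∀ i, hd i ∉ tl i := by
    intro i hmem
    obtain ⟨j, hjmem, hje⟩ := List.mem_map.mp hmem
    exact Stmt7Aux.mem_drop_one_finRange_ne (hl i) j hjmem (hsnd hje)
  have hndtl : ∀ i, (tl i).Nodup := by
    intro i
    apply List.Nodup.map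
    · intro j j' hjj
      exact hsnd hjj
    · exact ((List.nodup_finRange (l i)).sublist (List.drop_sublist 1 _))
  -- the network
  let stage1 : List (EuclideanSpace ℝ (Fin h) → EuclideanSpace ℝ (Fin h)) :=
    ((List.finRange k).map (fun i => (tl i).map (fun q => Stmt7Aux.cmp (hd i) q))).flatten
  let heads : List (Fin h) := ((List.finRange k).drop 1).map hd
  let stage2 : List (EuclideanSpace ℝ (Fin h) → EuclideanSpace ℝ (Fin h)) :=
    heads.map (fun q => Stmt7Aux.cmp q (hd ⟨0, hk⟩))
  let steps := stage1 ++ stage2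
  let Qhat : Matrix (Fin h) (Fin d) ℝ := fun r t => a (e.symm r).1 (e.symm r).2 t
  let qhat : EuclideanSpace ℝ (Fin h) := WithLp.toLp 2 fun r => b (e.symm r).1 (e.symm r).2
  let v : EuclideanSpace ℝ (Fin h) := EuclideanSpace.single (hd ⟨0, hk⟩) (1 : ℝ)
  have hsteps : ∀ g ∈ steps, IsEulerStep g := by
    intro g hg
    rcases List.mem_append.mp hg with h1 | h2
    · obtain ⟨lst, hlst, hglst⟩ := List.mem_flatten.mp h1
      obtain ⟨i, -, rfl⟩ := List.mem_map.mp hlst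
      obtain ⟨q, hq, rfl⟩ := List.mem_map.mp hglst
      apply Stmt7Aux.isEulerStep_cmp
      intro hEq
      exact hnotin i (hEq ▸ hq)
    · obtain ⟨q, hq, rfl⟩ := List.mem_map.mp h2
      apply Stmt7Aux.isEulerStep_cmp
      obtain ⟨i, hi, rfl⟩ := List.mem_map.mp hq
      intro hEq
      exact Stmt7Aux.mem_drop_one_finRange_ne hk i hi (hfst hEq)
  have hheads_nodup : heads.Nodup := by
    apply List.Nodup.map
    · intro i i' hii
      exact hfst hii
    · exact ((List.nodup_finRange k).sublist (List.drop_sublist 1 _))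
  have hhd0_not : hd ⟨0, hk⟩ ∉ heads := by
    intro hmem
    obtain ⟨i, hi, hie⟩ := List.mem_map.mp hmem
    exact Stmt7Aux.mem_drop_one_finRange_ne hk i hi (hfst hie)
  refine ⟨h, steps.length, Qhat, qhat, fun i => steps.get i, v, ?_, ?_, ?_⟩
  · intro ℓ
    exact hsteps _ (List.get_mem _ _)
  · show ‖EuclideanSpace.single (hd ⟨0, hk⟩) (1 : ℝ)‖ = 1
    rw [EuclideanSpace.norm_single]
    exact norm_one
  · intro x _
    set z : EuclideanSpace ℝ (Fin h) := matVec Qhat x + qhat with hz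
    have hzval : ∀ (i : Fin k) (j : Fin (l i)), z (e ⟨i, j⟩) = (∑ t, a i j t * x t) + b i j := by
      intro i j
      have hzadd : z (e ⟨i, j⟩) = matVec Qhat x (e ⟨i, j⟩) + qhat (e ⟨i, j⟩) := rfl
      rw [hzadd, Stmt7Aux.matVec_apply]
      have hsymm : e.symm (e ⟨i, j⟩) = ⟨i, j⟩ := e.symm_apply_apply _
      show (∑ t, a (e.symm (e ⟨i, j⟩)).1 (e.symm (e ⟨i, j⟩)).2 t * x t)
          + b (e.symm (e ⟨i, j⟩)).1 (e.symm (e ⟨i, j⟩)).2 = _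
      rw [hsymm]
    obtain ⟨y1, y2⟩ := Stmt7Aux.fold_blocks hd tl inB hhd htl hdisj hnotin hndtl
      (List.finRange k) z (List.nodup_finRange k)
    have hy : ∀ i : Fin k, Stmt7Aux.fold stage1 z (hd i) =
        Finset.univ.inf' ⟨⟨0, hl i⟩, Finset.mem_univ _⟩
          (fun j => (∑ t, a i j t * x t) + b i j) := by
      intro i
      rw [show Stmt7Aux.fold stage1 z (hd i) = (tl i).foldr (fun q m => min (z q) m) (z (hd i))
        from y1 i (List.mem_finRange i)]
      show (((List.finRange (l i)).drop 1).map (fun j => e ⟨i, j⟩)).foldr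
          (fun q m => min (z q) m) (z (e ⟨i, ⟨0, hl i⟩⟩)) = _
      rw [List.foldr_map]
      rw [Stmt7Aux.foldr_min_congr ((List.finRange (l i)).drop 1)
        (fun j _ => hzval i j) _, hzval i ⟨0, hl i⟩]
      exact Stmt7Aux.foldr_min_eq_inf' (hl i) _
    obtain ⟨m1, m2⟩ := Stmt7Aux.fold_max_spec (hd ⟨0, hk⟩) heads
      (Stmt7Aux.fold stage1 z) hhd0_not hheads_nodup
    have hfinal : Stmt7Aux.fold steps z (hd ⟨0, hk⟩) =
        Finset.univ.sup' ⟨⟨0, hk⟩, Finset.mem_univ _⟩ (fun i =>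
          Finset.univ.inf' ⟨⟨0, hl i⟩, Finset.mem_univ _⟩
            (fun j => (∑ t, a i j t * x t) + b i j)) := by
      rw [show Stmt7Aux.fold steps z = Stmt7Aux.fold stage2 (Stmt7Aux.fold stage1 z)
        from Stmt7Aux.fold_append stage1 stage2 z]
      rw [m1]
      show (((List.finRange k).drop 1).map hd).foldr
          (fun q m => max (Stmt7Aux.fold stage1 z q) m)
          (Stmt7Aux.fold stage1 z (hd ⟨0, hk⟩)) = _
      rw [List.foldr_map]
      rw [Stmt7Aux.foldr_max_congr ((List.finRange k).drop 1) (fun i _ => hy i) _, hy ⟨0, hk⟩]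
      exact Stmt7Aux.foldr_max_eq_sup' hk _
    have hchain : compChain steps.length (fun i => steps.get i) z = Stmt7Aux.fold steps z :=
      Stmt7Aux.compChain_eq_fold steps z
    rw [show (∑ i, v i * compChain steps.length (fun i => steps.get i) (matVec Qhat x + qhat) i)
        = ∑ i, v i * Stmt7Aux.fold steps z i from by rw [← hz, hchain]]
    have hvsum : (∑ i, v i * Stmt7Aux.fold steps z i) = Stmt7Aux.fold steps z (hd ⟨0, hk⟩) := by
      have : ∀ i : Fin h, v i * Stmt7Aux.fold steps z i =
          if i = hd ⟨0, hk⟩ then Stmt7Aux.fold steps z i else 0 := by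
        intro i
        by_cases hi : i = hd ⟨0, hk⟩
        · simp [v, hi, EuclideanSpace.single_apply]
        · simp [v, hi, EuclideanSpace.single_apply]
      rw [Finset.sum_congr rfl fun i _ => this i]
      exact Finset.sum_ite_eq' Finset.univ _ _ |>.trans (by simp)
    rw [hvsum, hfinal]
end Stmt7Aux
end

section
/- Let X ⊂ ℝ^d be a compact convex polytope (the convex hull of a finite set of points). Then for every 1-Lipschitz function f : X → ℝ and every ε > 0 there exists a continuous piecewise affine 1-Lipschitz function g : X → ℝ — i.e. a function of the form g(x) = max_{1≤i≤k} min_{1≤j≤l_i} (a_{i,j}ᵀ x + b_{i,j}) with all ‖a_{i,j}‖₂ ≤ 1 — such that max_{x∈X} |f(x) − g(x)| < ε. -/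
open scoped BigOperators

open scoped RealInnerProductSpace

/-- On a compact convex polytope, continuous piecewise affine `1`-Lipschitz
functions (in max–min form, with all slopes of Euclidean norm at most `1`) approximate every
`1`-Lipschitz function uniformly. -/
theorem stmt8 (d : ℕ) (S : Finset (EuclideanSpace ℝ (Fin d)))
    (f : EuclideanSpace ℝ (Fin d) → ℝ)
    (hf : LipschitzOnWith 1 f (convexHull ℝ (S : Set (EuclideanSpace ℝ (Fin d)))))
    (ε : ℝ) (hε : 0 < ε) :
    ∃ (k : ℕ) (hk : 0 < k) (l : Fin k → ℕ) (hl : ∀ i, 0 < l i)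
      (a : (i : Fin k) → Fin (l i) → EuclideanSpace ℝ (Fin d))
      (b : (i : Fin k) → Fin (l i) → ℝ),
      (∀ i j, ‖a i j‖ ≤ 1) ∧
      ∀ x ∈ convexHull ℝ (S : Set (EuclideanSpace ℝ (Fin d))),
        |f x - Finset.univ.sup' ⟨⟨0, hk⟩, Finset.mem_univ _⟩ (fun i =>
          Finset.univ.inf' ⟨⟨0, hl i⟩, Finset.mem_univ _⟩ (fun j =>
            (∑ t, a i j t * x t) + b i j))| < ε := by
    classical
  set X := convexHull ℝ (S : Set (EuclideanSpace ℝ (Fin d))) with hXdef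
  rcases S.eq_empty_or_nonempty with hS | hS
  · refine ⟨1, one_pos, fun _ => 1, fun _ => one_pos, fun _ _ => 0, fun _ _ => 0, ?_, ?_⟩
    · intro i j; simp
    · intro x hx
      rw [hXdef, hS] at hx
      simp at hx
  -- main case
  have hXc : IsCompact X := by rw [hXdef]; exact S.finite_toSet.isCompact_convexHull (𝕜 := ℝ)
  have hXne : X.Nonempty := by
    rw [hXdef, convexHull_nonempty_iff]; exact_mod_cast hS
  obtain ⟨R, hRX⟩ := hXc.isBounded.subset_closedBall 0
  set δ : ℝ := ε / 4 with hδdef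
  have hδ : 0 < δ := by positivity
  set η : ℝ := δ / (2 * |R| + 1) with hηdef
  have hη : 0 < η := by positivity
  -- net of X
  obtain ⟨t, ht⟩ := hXc.elim_finite_subcover (fun p : X => Metric.ball (p : EuclideanSpace ℝ (Fin d)) δ)
    (fun p => Metric.isOpen_ball)
    (fun x hx => Set.mem_iUnion.2 ⟨⟨x, hx⟩, Metric.mem_ball_self hδ⟩)
  set N : Finset (EuclideanSpace ℝ (Fin d)) := t.image Subtype.val with hN
  have hNX : ∀ p ∈ N, p ∈ X := by
    intro p hp
    simp only [hN, Finset.mem_image] at hp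
    obtain ⟨q, _, rfl⟩ := hp
    exact q.2
  have hNnet : ∀ x ∈ X, ∃ p ∈ N, dist x p < δ := by
    intro x hx
    have h2 := ht hx
    simp only [Set.mem_iUnion, Metric.mem_ball] at h2
    obtain ⟨p, hp, hd⟩ := h2
    exact ⟨p, Finset.mem_image_of_mem _ hp, hd⟩
  have hNne : N.Nonempty := by
    obtain ⟨x, hx⟩ := hXne
    obtain ⟨p, hp, -⟩ := hNnet x hx
    exact ⟨p, hp⟩
  -- net of unit ball
  have hBc : IsCompact (Metric.closedBall (0 : EuclideanSpace ℝ (Fin d)) 1) := isCompact_closedBall 0 1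
  obtain ⟨s, hs⟩ := hBc.elim_finite_subcover
    (fun u : Metric.closedBall (0 : EuclideanSpace ℝ (Fin d)) 1 => Metric.ball (u : EuclideanSpace ℝ (Fin d)) η)
    (fun u => Metric.isOpen_ball)
    (fun w hw => Set.mem_iUnion.2 ⟨⟨w, hw⟩, Metric.mem_ball_self hη⟩)
  set U : Finset (EuclideanSpace ℝ (Fin d)) := s.image Subtype.val with hU
  have hU1 : ∀ u ∈ U, ‖u‖ ≤ 1 := by
    intro u hu
    simp only [hU, Finset.mem_image] at hu
    obtain ⟨q, _, rfl⟩ := hu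
    have h := q.2
    simp only [Metric.mem_closedBall, dist_zero_right] at h
    exact h
  have hUnet : ∀ w ∈ Metric.closedBall (0 : EuclideanSpace ℝ (Fin d)) 1, ∃ u ∈ U, dist w u < η := by
    intro w hw
    have h2 := hs hw
    simp only [Set.mem_iUnion, Metric.mem_ball] at h2
    obtain ⟨u, hu, hd⟩ := h2
    exact ⟨u, Finset.mem_image_of_mem _ hu, hd⟩
  have hUne : U.Nonempty := by
    obtain ⟨u, hu, -⟩ := hUnet 0 (by simp)
    exact ⟨u, hu⟩
  -- key direction claim
  have hkey : ∀ x ∈ X, ∀ p ∈ N, ∃ u ∈ U, ⟪u, x - p⟫ ≤ -‖x - p‖ + δ := by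
    intro x hx p hp
    set y : EuclideanSpace ℝ (Fin d) := x - p with hy
    by_cases hy0 : y = 0
    · obtain ⟨u, hu⟩ := hUne
      refine ⟨u, hu, ?_⟩
      rw [hy0]
      simp [hδ.le]
    · have hny : (0 : ℝ) < ‖y‖ := norm_pos_iff.2 hy0
      set w : EuclideanSpace ℝ (Fin d) := -(‖y‖⁻¹ • y) with hw
      have hwB : w ∈ Metric.closedBall (0 : EuclideanSpace ℝ (Fin d)) 1 := by
        simp only [Metric.mem_closedBall, dist_zero_right, hw, norm_neg, norm_smul,
          norm_inv, norm_norm]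
        rw [inv_mul_cancel₀ hny.ne']
      obtain ⟨u, hu, hd⟩ := hUnet w hwB
      refine ⟨u, hu, ?_⟩
      have hwy : ⟪w, y⟫ = -‖y‖ := by
        rw [hw, inner_neg_left, real_inner_smul_left, real_inner_self_eq_norm_sq]
        field_simp
      have huw : ⟪u - w, y⟫ ≤ ‖u - w‖ * ‖y‖ := real_inner_le_norm _ _
      have hyR : ‖y‖ ≤ 2 * |R| := by
        have hx' : ‖x‖ ≤ R := by simpa [dist_eq_norm] using hRX hx
        have hp' : ‖p‖ ≤ R := by simpa [dist_eq_norm] using hRX (hNX p hp)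
        have : R ≤ |R| := le_abs_self R
        calc ‖y‖ ≤ ‖x‖ + ‖p‖ := norm_sub_le x p
        _ ≤ 2 * |R| := by nlinarith
      have hstep : ‖u - w‖ * ‖y‖ ≤ η * (2 * |R| + 1) := by
        have h1 : ‖u - w‖ ≤ η := by
          rw [← dist_eq_norm, dist_comm]
          exact hd.le
        have h2 : ‖y‖ ≤ 2 * |R| + 1 := by linarith
        exact mul_le_mul h1 h2 (norm_nonneg _) hη.le
      have hηR : η * (2 * |R| + 1) = δ := by
        rw [hηdef]
        field_simp
      have : ⟪u, y⟫ = ⟪w, y⟫ + ⟪u - w, y⟫ := by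
        rw [← inner_add_left]
        congr 1
        abel
      rw [this, hwy]
      linarith [huw, hstep, hηR ▸ hstep]
  -- Cauchy-Schwarz
  have hCS : ∀ u ∈ U, ∀ y : EuclideanSpace ℝ (Fin d), |⟪u, y⟫| ≤ ‖y‖ := by
    intro u hu y
    calc |⟪u, y⟫| ≤ ‖u‖ * ‖y‖ := abs_real_inner_le_norm u y
    _ ≤ 1 * ‖y‖ := mul_le_mul_of_nonneg_right (hU1 u hu) (norm_nonneg _)
    _ = ‖y‖ := one_mul _
  -- Lipschitz bound
  have hLip : ∀ x ∈ X, ∀ p ∈ N, |f x - f p| ≤ ‖x - p‖ := by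
    intro x hx p hp
    have := hf.dist_le_mul x hx p (hNX p hp)
    simpa [Real.dist_eq, dist_eq_norm] using this
  -- indexing
  set k := N.card with hkdef
  have hk : 0 < k := Finset.card_pos.2 hNne
  set m := U.card with hmdef
  have hm : 0 < m := Finset.card_pos.2 hUne
  set eN : Fin k → EuclideanSpace ℝ (Fin d) := fun i => (N.equivFin.symm i : EuclideanSpace ℝ (Fin d)) with heN
  set eU : Fin m → EuclideanSpace ℝ (Fin d) := fun j => (U.equivFin.symm j : EuclideanSpace ℝ (Fin d)) with heU
  have heNmem : ∀ i, eN i ∈ N := fun i => (N.equivFin.symm i).2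
  have heUmem : ∀ j, eU j ∈ U := fun j => (U.equivFin.symm j).2
  have heNsurj : ∀ p ∈ N, ∃ i, eN i = p := by
    intro p hp
    exact ⟨N.equivFin ⟨p, hp⟩, by simp [heN]⟩
  have heUsurj : ∀ u ∈ U, ∃ j, eU j = u := by
    intro u hu
    exact ⟨U.equivFin ⟨u, hu⟩, by simp [heU]⟩
  refine ⟨k, hk, fun _ => m, fun _ => hm, fun i j => eU j,
    fun i j => f (eN i) - ⟪eU j, eN i⟫, fun i j => hU1 _ (heUmem j), ?_⟩
  intro x hx
  -- rewrite terms as inner products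
  have hterm : ∀ (i : Fin k) (j : Fin m),
      (∑ t, eU j t * x t) + (f (eN i) - ⟪eU j, eN i⟫) = f (eN i) + ⟪eU j, x - eN i⟫ := by
    intro i j
    have h1 : (∑ t, eU j t * x t) = ⟪eU j, x⟫ := by
      simp [PiLp.inner_apply, RCLike.inner_apply]
      exact Finset.sum_congr rfl (fun _ _ => mul_comm _ _)
    rw [h1, inner_sub_right]
    ring
  set G : ℝ := Finset.univ.sup' ⟨⟨0, hk⟩, Finset.mem_univ _⟩ (fun i =>
    Finset.univ.inf' ⟨⟨0, hm⟩, Finset.mem_univ _⟩ (fun j =>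
      (∑ t, eU j t * x t) + (f (eN i) - ⟪eU j, eN i⟫))) with hG
  have hupper : G ≤ f x + δ := by
    apply Finset.sup'_le
    intro i _
    obtain ⟨u, hu, hub⟩ := hkey x hx (eN i) (heNmem i)
    obtain ⟨j, rfl⟩ := heUsurj u hu
    calc Finset.univ.inf' ⟨⟨0, hm⟩, Finset.mem_univ _⟩ (fun j =>
          (∑ t, eU j t * x t) + (f (eN i) - ⟪eU j, eN i⟫))
        ≤ (∑ t, eU j t * x t) + (f (eN i) - ⟪eU j, eN i⟫) :=
          Finset.inf'_le _ (Finset.mem_univ j)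
    _ = f (eN i) + ⟪eU j, x - eN i⟫ := hterm i j
    _ ≤ f (eN i) + (-‖x - eN i‖ + δ) := by linarith
    _ ≤ f x + δ := by
        have := hLip x hx (eN i) (heNmem i)
        have := abs_le.1 this
        linarith [this.1, this.2]
  have hlower : f x - 2 * δ ≤ G := by
    obtain ⟨p, hp, hdp⟩ := hNnet x hx
    obtain ⟨i, rfl⟩ := heNsurj p hp
    refine le_trans ?_ (Finset.le_sup' _ (Finset.mem_univ i))
    apply Finset.le_inf'
    intro j _
    rw [hterm i j]
    have h1 := (abs_le.1 (hCS (eU j) (heUmem j) (x - eN i))).1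
    have h2 := (abs_le.1 (hLip x hx (eN i) hp)).2
    have h3 : ‖x - eN i‖ < δ := by
      rw [← dist_eq_norm]; exact hdp
    linarith
  have : |f x - G| ≤ 2 * δ := by
    rw [abs_le]
    constructor <;> linarith
  calc |f x - G| ≤ 2 * δ := this
  _ < ε := by rw [hδdef]; linarith
end
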